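/- arXiv:0706.3526 — 11 statements merged into one kernel-verified Lean document; each statement's English description precedes it below -/
import Mathlib

section
/- Let d be a positive natural number and let Ω be a finite index set. Suppose for each i ∈ Ω we are given a linear map Φ_i : Matrix (Fin d) (Fin d) ℂ →ₗ[ℂ] Matrix (Fin d) (Fin d) ℂ which is positive (it maps positive semidefinite matrices to positive semidefinite matrices), and suppose that ∑_{i ∈ Ω} Φ_i(T) = T for every matrix T. Then for each i ∈ Ω there exists a constant λ_i ∈ ℝ such that trace(Φ_i(T)) = λ_i for every density matrix T; equivalently, the induced observable is trivial: trace(Φ_i(T)) = λ_i · trace(T) for every matrix T. -/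
set_option linter.unusedSectionVars false

open scoped ComplexOrder
open Matrix

namespace NoInfoAux

variable {n : Type*} [Fintype n] [DecidableEq n]

/-- Rank-one outer product `ψψ*`. -/
def outer (ψ : n → ℂ) : Matrix n n ℂ := Matrix.vecMulVec ψ (star ψ)

lemma outer_apply (ψ : n → ℂ) (a b : n) : outer ψ a b = ψ a * star (ψ b) := rfl

lemma star_dot_comm (x y : n → ℂ) : star (star x ⬝ᵥ y) = star y ⬝ᵥ x := by
  simp only [dotProduct, star_sum, star_mul', star_star, Pi.star_apply]
  exact Finset.sum_congr rfl fun a _ => mul_comm _ _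

lemma outer_mulVec (ψ x : n → ℂ) : outer ψ *ᵥ x = (star ψ ⬝ᵥ x) • ψ := by
  funext a
  simp only [outer, mulVec, dotProduct, vecMulVec_apply, Pi.smul_apply, smul_eq_mul,
    Pi.star_apply, Finset.sum_mul]
  exact Finset.sum_congr rfl fun b _ => by ring

lemma quad_outer (ψ x : n → ℂ) :
    star x ⬝ᵥ (outer ψ *ᵥ x) = star (star ψ ⬝ᵥ x) * (star ψ ⬝ᵥ x) := by
  rw [outer_mulVec, dotProduct_smul, smul_eq_mul, ← star_dot_comm ψ x]
  ring

lemma posSemidef_outer (ψ : n → ℂ) : (outer ψ).PosSemidef := by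
  refine Matrix.PosSemidef.of_dotProduct_mulVec_nonneg ?_ ?_
  · ext a b
    simp only [conjTranspose_apply, outer_apply, star_mul', star_star]
    ring
  · intro x
    rw [quad_outer]
    exact star_mul_self_nonneg _

lemma trace_outer (ψ : n → ℂ) : (outer ψ).trace = star ψ ⬝ᵥ ψ := by
  simp only [trace, diag, outer_apply, dotProduct, Pi.star_apply]
  exact Finset.sum_congr rfl fun a _ => mul_comm _ _


/-- A PSD matrix dominated by a rank-one outer product is a scalar multiple of it. -/
lemma eq_smul_outer {P : Matrix n n ℂ} {ψ : n → ℂ} (hP : P.PosSemidef)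
    (hQ : (outer ψ - P).PosSemidef) : ∃ c : ℂ, P = c • outer ψ := by
  -- vectors orthogonal to ψ are killed by P
  have key : ∀ φ : n → ℂ, star ψ ⬝ᵥ φ = 0 → P *ᵥ φ = 0 := by
    intro φ h
    refine (hP.dotProduct_mulVec_zero_iff φ).mp ?_
    have h1 : 0 ≤ star φ ⬝ᵥ ((outer ψ - P) *ᵥ φ) := hQ.dotProduct_mulVec_nonneg φ
    have h2 : star φ ⬝ᵥ (outer ψ *ᵥ φ) = 0 := by
      rw [quad_outer, h, mul_zero]
    have h3 : star φ ⬝ᵥ ((outer ψ - P) *ᵥ φ)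
        = star φ ⬝ᵥ (outer ψ *ᵥ φ) - star φ ⬝ᵥ (P *ᵥ φ) := by
      rw [sub_mulVec, dotProduct_sub]
    rw [h3, h2, zero_sub] at h1
    exact le_antisymm (neg_nonneg.mp h1) (hP.dotProduct_mulVec_nonneg φ)
  by_cases hψ : ψ = 0
  · refine ⟨0, ?_⟩
    ext a b
    have h0 := congrFun (key (Pi.single b 1) (by simp [hψ])) a
    simp only [mulVec_single_one, Matrix.col_apply, Pi.zero_apply] at h0
    simp [h0]
  · set nψ : ℂ := star ψ ⬝ᵥ ψ with hnψ
    have hn0 : nψ ≠ 0 := fun h => hψ (dotProduct_star_self_eq_zero.mp h)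
    set s : ℂ := star ψ ⬝ᵥ (P *ᵥ ψ) with hs
    -- P ψ is proportional to ψ
    set φ' : n → ℂ := nψ • (P *ᵥ ψ) - s • ψ with hφ'
    have horth : star ψ ⬝ᵥ φ' = 0 := by
      rw [hφ', dotProduct_sub, dotProduct_smul, dotProduct_smul, ← hs, ← hnψ]
      simp only [smul_eq_mul]
      ring
    have hPφ' : P *ᵥ φ' = 0 := key φ' horth
    have hφ'ψ : star φ' ⬝ᵥ ψ = 0 := by
      rw [← star_dot_comm, horth, star_zero]
    have hφ'Pψ : star φ' ⬝ᵥ (P *ᵥ ψ) = 0 := by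
      have e1 : star (star ψ ⬝ᵥ (P *ᵥ φ')) = star φ' ⬝ᵥ (P *ᵥ ψ) := by
        rw [star_dot_comm, star_mulVec, hP.1, ← dotProduct_mulVec]
      rw [← e1, hPφ', dotProduct_zero, star_zero]
    have hφ'0 : φ' = 0 := by
      refine dotProduct_star_self_eq_zero.mp ?_
      rw [hφ', dotProduct_sub, dotProduct_smul, dotProduct_smul, ← hφ']
      rw [hφ'Pψ, hφ'ψ]
      simp
    have hPψ : nψ • (P *ᵥ ψ) = s • ψ := by
      have := sub_eq_zero.mpr (rfl : (nψ • (P *ᵥ ψ) : n → ℂ) = nψ • (P *ᵥ ψ))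
      exact sub_eq_zero.mp hφ'0
    -- general vectors
    have key2 : ∀ x : n → ℂ, nψ • (P *ᵥ x) = (star ψ ⬝ᵥ x) • (P *ᵥ ψ) := by
      intro x
      have horth2 : star ψ ⬝ᵥ (nψ • x - (star ψ ⬝ᵥ x) • ψ) = 0 := by
        rw [dotProduct_sub, dotProduct_smul, dotProduct_smul, ← hnψ]
        simp only [smul_eq_mul]
        ring
      have h0 := key _ horth2
      rw [mulVec_sub, mulVec_smul, mulVec_smul, sub_eq_zero] at h0
      exact h0
    refine ⟨s / (nψ * nψ), ?_⟩
    ext a b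
    have e1 := congrFun (key2 (Pi.single b 1)) a
    simp only [mulVec_single_one, Matrix.col_apply, mul_one, Pi.smul_apply, smul_eq_mul,
      dotProduct_single, Pi.star_apply] at e1
    have e2 := congrFun hPψ a
    simp only [Pi.smul_apply, smul_eq_mul] at e2
    have : (nψ * nψ) * P a b = s * (ψ a * star (ψ b)) := by
      calc (nψ * nψ) * P a b = nψ * (nψ * P a b) := by ring
        _ = nψ * (star (ψ b) * (P *ᵥ ψ) a) := by rw [e1]
        _ = star (ψ b) * (nψ * (P *ᵥ ψ) a) := by ring
        _ = star (ψ b) * (s * ψ a) := by rw [e2]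
        _ = s * (ψ a * star (ψ b)) := by ring
    rw [Matrix.smul_apply, outer_apply, smul_eq_mul]
    field_simp
    rw [mul_comm] at this
    linear_combination this


lemma outer_add_sub (ψ φ : n → ℂ) :
    outer (ψ + φ) + outer (ψ - φ) = (2:ℂ) • outer ψ + (2:ℂ) • outer φ := by
  ext a b
  simp only [Matrix.add_apply, Matrix.smul_apply, outer_apply, Pi.add_apply, Pi.sub_apply,
    smul_eq_mul, star_add, star_sub, Pi.star_apply]
  ring

/-- Coefficients of a scalar-preserving map agree on orthogonal nonzero vectors. -/
lemma coeff_eq {L : Matrix n n ℂ →ₗ[ℂ] Matrix n n ℂ} {ψ φ : n → ℂ}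
    (hψ0 : ψ ≠ 0) (hφ0 : φ ≠ 0) (horth : star ψ ⬝ᵥ φ = 0)
    {a b p q : ℂ}
    (ha : L (outer ψ) = a • outer ψ) (hb : L (outer φ) = b • outer φ)
    (hp : L (outer (ψ + φ)) = p • outer (ψ + φ))
    (hq : L (outer (ψ - φ)) = q • outer (ψ - φ)) : a = b := by
  have horth' : star φ ⬝ᵥ ψ = 0 := by rw [← star_dot_comm, horth, star_zero]
  have key : p • outer (ψ + φ) + q • outer (ψ - φ)
      = ((2:ℂ) * a) • outer ψ + ((2:ℂ) * b) • outer φ := by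
    rw [← hp, ← hq, ← map_add, outer_add_sub, map_add, L.map_smul, L.map_smul, ha, hb,
      smul_smul, smul_smul]
  -- quadratic form evaluation
  have ev : ∀ (x : n → ℂ) (M N : Matrix n n ℂ), M = N →
      star x ⬝ᵥ (M *ᵥ x) = star x ⬝ᵥ (N *ᵥ x) := fun x M N h => by rw [h]
  have quad_smul : ∀ (c : ℂ) (χ x : n → ℂ),
      star x ⬝ᵥ ((c • outer χ) *ᵥ x) = c * (star (star χ ⬝ᵥ x) * (star χ ⬝ᵥ x)) := by
    intro c χ x
    rw [smul_mulVec, dotProduct_smul, smul_eq_mul, quad_outer]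
  have evadd : ∀ (c₁ c₂ : ℂ) (χ₁ χ₂ x : n → ℂ),
      star x ⬝ᵥ ((c₁ • outer χ₁ + c₂ • outer χ₂) *ᵥ x)
        = c₁ * (star (star χ₁ ⬝ᵥ x) * (star χ₁ ⬝ᵥ x))
          + c₂ * (star (star χ₂ ⬝ᵥ x) * (star χ₂ ⬝ᵥ x)) := by
    intro c₁ c₂ χ₁ χ₂ x
    rw [add_mulVec, dotProduct_add, quad_smul, quad_smul]
  set nψ : ℂ := star ψ ⬝ᵥ ψ with hnψ
  set nφ : ℂ := star φ ⬝ᵥ φ with hnφ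
  have hnψ0 : nψ ≠ 0 := fun h => hψ0 (dotProduct_star_self_eq_zero.mp h)
  have hnφ0 : nφ ≠ 0 := fun h => hφ0 (dotProduct_star_self_eq_zero.mp h)
  have dψ₁ : star (ψ + φ) ⬝ᵥ ψ = nψ := by
    rw [star_add, add_dotProduct, horth', ← hnψ, add_zero]
  have dψ₂ : star (ψ - φ) ⬝ᵥ ψ = nψ := by
    rw [star_sub, sub_dotProduct, horth', ← hnψ, sub_zero]
  have dφ₁ : star (ψ + φ) ⬝ᵥ φ = nφ := by
    rw [star_add, add_dotProduct, horth, ← hnφ, zero_add]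
  have dφ₂ : star (ψ - φ) ⬝ᵥ φ = -nφ := by
    rw [star_sub, sub_dotProduct, horth, ← hnφ, zero_sub]
  have hmψ : (star nψ * nψ) ≠ 0 := mul_ne_zero (star_ne_zero.mpr hnψ0) hnψ0
  have hmφ : (star nφ * nφ) ≠ 0 := mul_ne_zero (star_ne_zero.mpr hnφ0) hnφ0
  have eψ := ev ψ _ _ key
  rw [evadd, evadd, dψ₁, dψ₂, ← hnψ, horth'] at eψ
  simp only [star_zero, mul_zero, add_zero, zero_mul] at eψ
  have e1 : p + q = 2 * a := mul_right_cancel₀ hmψ (by linear_combination eψ)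
  have eφ := ev φ _ _ key
  rw [evadd, evadd, dφ₁, dφ₂, ← hnφ, horth] at eφ
  simp only [star_zero, mul_zero, add_zero, zero_mul, zero_add, star_neg, neg_mul,
    mul_neg, neg_neg] at eφ
  have e2 : p + q = 2 * b := mul_right_cancel₀ hmφ (by linear_combination eφ)
  linear_combination (e2 - e1) / 2


lemma posSemidef_sum {ι : Type*} (s : Finset ι) (f : ι → Matrix n n ℂ)
    (h : ∀ i ∈ s, (f i).PosSemidef) : (∑ i ∈ s, f i).PosSemidef := by
  classical
  induction s using Finset.cons_induction with
  | empty => simpa using Matrix.PosSemidef.zero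
  | cons i s his ih =>
      rw [Finset.sum_cons]
      exact (h i (Finset.mem_cons_self _ _)).add
        (ih fun j hj => h j (Finset.mem_cons_of_mem hj))

lemma trace_nonneg {M : Matrix n n ℂ} (hM : M.PosSemidef) : 0 ≤ M.trace := by
  refine Finset.sum_nonneg fun a _ => ?_
  have h1 := hM.dotProduct_mulVec_nonneg (Pi.single (M := fun _ => ℂ) a 1)
  have hst : star (Pi.single (M := fun _ => ℂ) a 1) = Pi.single a 1 := by
    ext b; by_cases hb : b = a <;> simp [Pi.single_apply, hb]
  rw [hst] at h1
  simpa [single_dotProduct] using h1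

lemma stdBasis_decomp {j k : n} (hjk : j ≠ k) :
    Matrix.single j k (1:ℂ)
      = (4:ℂ)⁻¹ • (outer ((Pi.single j 1 + Pi.single k 1 : n → ℂ))
            - outer ((Pi.single j 1 - Pi.single k 1 : n → ℂ)))
        + (Complex.I / 4) • (outer ((Pi.single j 1 + Pi.single k Complex.I : n → ℂ))
            - outer ((Pi.single j 1 - Pi.single k Complex.I : n → ℂ))) := by
  ext a b
  simp only [Matrix.add_apply, Matrix.smul_apply, Matrix.sub_apply, outer_apply,
    Pi.add_apply, Pi.sub_apply, Pi.smul_apply, Pi.single_apply, smul_eq_mul,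
    Matrix.single, Matrix.of_apply]
  by_cases haj : a = j <;> by_cases hak : a = k <;> by_cases hbj : b = j <;>
    by_cases hbk : b = k <;>
    simp_all [Complex.ext_iff, eq_comm] <;> norm_num

lemma single_pair_dot {j k : n} (hjk : j ≠ k) (α β γ δ : ℂ) :
    star ((Pi.single j α + Pi.single k β : n → ℂ))
      ⬝ᵥ ((Pi.single j γ + Pi.single k δ : n → ℂ))
      = star α * γ + star β * δ := by
  have hterm : ∀ a : n, (star ((Pi.single j α + Pi.single k β : n → ℂ))) a
        * ((Pi.single j γ + Pi.single k δ : n → ℂ)) a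
      = (if a = j then star α * γ else 0) + (if a = k then star β * δ else 0) := by
    intro a
    by_cases haj : a = j <;> by_cases hak : a = k <;>
      simp_all [Pi.single_apply]
  rw [dotProduct, Finset.sum_congr rfl fun a _ => hterm a, Finset.sum_add_distrib]
  simp

lemma single_sub_eq_add {j k : n} (γ δ : ℂ) :
    (Pi.single j γ - Pi.single k δ : n → ℂ)
      = (Pi.single j γ + Pi.single k (-δ) : n → ℂ) := by
  ext a
  by_cases haj : a = j <;> by_cases hak : a = k <;>
    simp_all [Pi.single_apply] <;> ring

end NoInfoAux

/-- "No information gain without disturbance": if a finite-outcome instrument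
(given by positive linear operations summing to the identity map) leaves every
state unchanged, then the induced observable is trivial. -/
theorem no_information_without_disturbance
    (d : ℕ) (hd : 0 < d) (Ω : Type) [Fintype Ω]
    (Φ : Ω → (Matrix (Fin d) (Fin d) ℂ →ₗ[ℂ] Matrix (Fin d) (Fin d) ℂ))
    (hpos : ∀ i, ∀ T : Matrix (Fin d) (Fin d) ℂ, T.PosSemidef → (Φ i T).PosSemidef)
    (hsum : ∀ T : Matrix (Fin d) (Fin d) ℂ, ∑ i, Φ i T = T) :
    ∀ i : Ω, ∃ lam : ℝ,
      (∀ T : Matrix (Fin d) (Fin d) ℂ, T.PosSemidef → T.trace = 1 →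
        (Φ i T).trace = (lam : ℂ)) ∧
      (∀ T : Matrix (Fin d) (Fin d) ℂ, (Φ i T).trace = (lam : ℂ) * T.trace) := by
  classical
  intro i
  -- every rank-one projection is mapped to a multiple of itself
  have hex : ∀ ψ : Fin d → ℂ, ∃ c : ℂ,
      Φ i (NoInfoAux.outer ψ) = c • NoInfoAux.outer ψ := by
    intro ψ
    refine NoInfoAux.eq_smul_outer (hpos i _ (NoInfoAux.posSemidef_outer ψ)) ?_
    have h := hsum (NoInfoAux.outer ψ)
    rw [← Finset.add_sum_erase _ _ (Finset.mem_univ i)] at h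
    have hrw : NoInfoAux.outer ψ - Φ i (NoInfoAux.outer ψ)
        = ∑ m ∈ Finset.univ.erase i, Φ m (NoInfoAux.outer ψ) :=
      (eq_sub_of_add_eq' h).symm
    rw [hrw]
    exact NoInfoAux.posSemidef_sum _ _
      (fun m _ => hpos m _ (NoInfoAux.posSemidef_outer ψ))
  choose c hc using hex
  have hceq : ∀ ψ φ : Fin d → ℂ, ψ ≠ 0 → φ ≠ 0 → star ψ ⬝ᵥ φ = 0 → c ψ = c φ :=
    fun ψ φ h1 h2 h3 =>
      NoInfoAux.coeff_eq h1 h2 h3 (hc ψ) (hc φ) (hc (ψ + φ)) (hc (ψ - φ))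
  set e : Fin d → (Fin d → ℂ) := fun j => Pi.single j (1:ℂ) with he
  have he0 : ∀ j, e j ≠ 0 := by
    intro j h
    have := congrFun h j
    simp [he] at this
  have heort : ∀ j k : Fin d, j ≠ k → star (e j) ⬝ᵥ e k = 0 := by
    intro j k hjk
    have hst : star (e j) = e j := by
      ext b; by_cases hb : b = j <;> simp [he, Pi.single_apply, hb]
    rw [hst, he]
    simp [single_dotProduct, Pi.single_apply, hjk]
  set z : Fin d := ⟨0, hd⟩ with hz
  set lamC : ℂ := c (e z) with hlamC
  have hdiag : ∀ j, c (e j) = lamC := by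
    intro j
    by_cases hj : j = z
    · rw [hj]
    · exact hceq _ _ (he0 j) (he0 z) (heort j z hj)
  -- trace of Φ i on outer products
  have hstj : ∀ j : Fin d, star (e j) ⬝ᵥ e j = 1 := by
    intro j
    have hst : star (e j) = e j := by
      ext b; by_cases hb : b = j <;> simp [he, Pi.single_apply, hb]
    rw [hst, he]
    simp [single_dotProduct, Pi.single_apply]
  have htrout : ∀ ψ : Fin d → ℂ,
      (Φ i (NoInfoAux.outer ψ)).trace = c ψ * (star ψ ⬝ᵥ ψ) := by
    intro ψ
    rw [hc ψ, Matrix.trace_smul, NoInfoAux.trace_outer, smul_eq_mul]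
  -- matrix units
  have houter_eq : ∀ j : Fin d,
      Matrix.single j j (1:ℂ) = NoInfoAux.outer (e j) := by
    intro j
    rw [Matrix.single_eq_single_vecMulVec_single]
    have hst : star (e j) = e j := by
      ext b; by_cases hb : b = j <;> simp [he, Pi.single_apply, hb]
    unfold NoInfoAux.outer
    rw [hst, he]
  have htrE : ∀ j k : Fin d, (Φ i (Matrix.single j k (1:ℂ))).trace
      = if j = k then lamC else 0 := by
    intro j k
    by_cases hjk : j = k
    · subst hjk
      rw [if_pos rfl, houter_eq j, htrout, hstj, mul_one, hdiag]
    · rw [if_neg hjk]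
      rw [NoInfoAux.stdBasis_decomp hjk]
      set u : Fin d → ℂ := (Pi.single j 1 + Pi.single k 1 : Fin d → ℂ) with hu
      set v : Fin d → ℂ := (Pi.single j 1 - Pi.single k 1 : Fin d → ℂ) with hv
      set w : Fin d → ℂ := (Pi.single j 1 + Pi.single k Complex.I : Fin d → ℂ) with hw
      set x : Fin d → ℂ := (Pi.single j 1 - Pi.single k Complex.I : Fin d → ℂ) with hx
      have hv' : v = (Pi.single j 1 + Pi.single k (-1) : Fin d → ℂ) :=
        NoInfoAux.single_sub_eq_add 1 1
      have hx' : x = (Pi.single j 1 + Pi.single k (-Complex.I) : Fin d → ℂ) :=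
        NoInfoAux.single_sub_eq_add 1 Complex.I
      have hu0 : u ≠ 0 := by
        intro h; have := congrFun h j
        simp [hu, Pi.single_apply, Ne.symm hjk] at this
      have hv0 : v ≠ 0 := by
        intro h; have := congrFun h j
        simp [hv, Pi.single_apply, Ne.symm hjk] at this
      have hw0 : w ≠ 0 := by
        intro h; have := congrFun h j
        simp [hw, Pi.single_apply, Ne.symm hjk] at this
      have hx0 : x ≠ 0 := by
        intro h; have := congrFun h j
        simp [hx, Pi.single_apply, Ne.symm hjk] at this
      have horth_uv : star u ⬝ᵥ v = 0 := by
        rw [hu, hv', NoInfoAux.single_pair_dot hjk]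
        simp
      have horth_wx : star w ⬝ᵥ x = 0 := by
        rw [hw, hx', NoInfoAux.single_pair_dot hjk]
        simp [Complex.star_def, Complex.conj_I]
      have hnu : star u ⬝ᵥ u = 2 := by
        rw [hu, NoInfoAux.single_pair_dot hjk]; norm_num
      have hnv : star v ⬝ᵥ v = 2 := by
        rw [hv', NoInfoAux.single_pair_dot hjk]; norm_num
      have hnw : star w ⬝ᵥ w = 2 := by
        rw [hw, NoInfoAux.single_pair_dot hjk]
        simp [Complex.star_def, Complex.conj_I]
        norm_num
      have hnx : star x ⬝ᵥ x = 2 := by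
        rw [hx', NoInfoAux.single_pair_dot hjk]
        simp [Complex.star_def, Complex.conj_I]
        norm_num
      have hcuv : c u = c v := hceq u v hu0 hv0 horth_uv
      have hcwx : c w = c x := hceq w x hw0 hx0 horth_wx
      rw [map_add, (Φ i).map_smul, (Φ i).map_smul, (Φ i).map_sub, (Φ i).map_sub,
        Matrix.trace_add, Matrix.trace_smul, Matrix.trace_smul,
        Matrix.trace_sub, Matrix.trace_sub, htrout, htrout, htrout, htrout,
        hnu, hnv, hnw, hnx, hcuv, hcwx]
      simp only [smul_eq_mul]
      ring
  -- the coefficient is a nonnegative real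
  have hlam_real : lamC = ((lamC.re : ℝ) : ℂ) := by
    have hpsd := hpos i _ (NoInfoAux.posSemidef_outer (e z))
    have htr : (Φ i (NoInfoAux.outer (e z))).trace = lamC := by
      rw [htrout, hstj, mul_one, hdiag]
    have h0 : 0 ≤ lamC := htr ▸ NoInfoAux.trace_nonneg hpsd
    obtain ⟨h1, h2⟩ := Complex.nonneg_iff.mp h0
    exact Complex.ext (by simp) (by simp [← h2])
  -- main computation
  have main : ∀ T : Matrix (Fin d) (Fin d) ℂ, (Φ i T).trace = lamC * T.trace := by
    intro T
    conv_lhs => rw [Matrix.matrix_eq_sum_single T]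
    rw [map_sum, Matrix.trace_sum]
    have hterm : ∀ j : Fin d, (Φ i (∑ k, Matrix.single j k (T j k))).trace
        = T j j * lamC := by
      intro j
      rw [map_sum, Matrix.trace_sum]
      have : ∀ k : Fin d, (Φ i (Matrix.single j k (T j k))).trace
          = if j = k then T j k * lamC else 0 := by
        intro k
        have h1 : Matrix.single j k (T j k)
            = T j k • Matrix.single j k (1:ℂ) := by
          rw [Matrix.smul_single, smul_eq_mul, mul_one]
        rw [h1, (Φ i).map_smul, Matrix.trace_smul, htrE j k, smul_eq_mul]
        by_cases hjk : j = k <;> simp [hjk]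
      rw [Finset.sum_congr rfl fun k _ => this k]
      simp [Finset.sum_ite_eq]
    rw [Finset.sum_congr rfl fun j _ => hterm j]
    rw [Matrix.trace, Finset.mul_sum]
    exact Finset.sum_congr rfl fun j _ => by rw [Matrix.diag_apply]; ring
  refine ⟨lamC.re, ?_, ?_⟩
  · intro T _ htr1
    rw [main, htr1, mul_one]
    exact hlam_real
  · intro T
    rw [main, ← hlam_real]
end

section
/- Let d be a positive natural number and let Φ, Ψ : Matrix (Fin d) (Fin d) ℂ →ₗ[ℂ] Matrix (Fin d) (Fin d) ℂ be linear maps, each positive (mapping positive semidefinite matrices to positive semidefinite matrices), such that Φ(T) + Ψ(T) = T for every matrix T. Then for every unit vector φ ∈ EuclideanSpace ℂ (Fin d) there exists a real number c with 0 ≤ c ≤ 1 such that Φ(P_φ) = c • P_φ, where P_φ denotes the rank-one matrix with entries (P_φ)_{jk} = φ_j · conj(φ_k) (the orthogonal projection onto the span of φ). -/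
open scoped ComplexOrder

open Matrix

/-- A nondisturbing pair of positive operations can only rescale each pure state. -/
theorem operation_rescales_pure_states
    (d : ℕ) (hd : 0 < d)
    (Φ Ψ : Matrix (Fin d) (Fin d) ℂ →ₗ[ℂ] Matrix (Fin d) (Fin d) ℂ)
    (hΦ : ∀ T : Matrix (Fin d) (Fin d) ℂ, T.PosSemidef → (Φ T).PosSemidef)
    (hΨ : ∀ T : Matrix (Fin d) (Fin d) ℂ, T.PosSemidef → (Ψ T).PosSemidef)
    (hsum : ∀ T : Matrix (Fin d) (Fin d) ℂ, Φ T + Ψ T = T) :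
    ∀ φ : EuclideanSpace ℂ (Fin d), ‖φ‖ = 1 →
      ∃ c : ℝ, 0 ≤ c ∧ c ≤ 1 ∧
        Φ (Matrix.of fun j k => φ j * star (φ k)) =
          (c : ℂ) • (Matrix.of fun j k => φ j * star (φ k)) := by
  intro φ hφ
  classical
  set φv : Fin d → ℂ := fun i => φ i with hφvdef
  have hnorm : star φv ⬝ᵥ φv = 1 := by
    have h1 : (inner ℂ φ φ : ℂ) = 1 := by
      rw [inner_self_eq_norm_sq_to_K, hφ]; norm_num
    simp only [PiLp.inner_apply, RCLike.inner_apply] at h1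
    simp_rw [mul_comm (φ.ofLp _)] at h1
    simpa [dotProduct, PiLp.inner_apply, RCLike.inner_apply, hφvdef] using h1
  set P : Matrix (Fin d) (Fin d) ℂ := Matrix.of fun j k => φv j * star (φv k) with hPdef
  have hPmul : ∀ x : Fin d → ℂ, P *ᵥ x = (star φv ⬝ᵥ x) • φv := by
    intro x
    funext j
    simp only [mulVec, dotProduct, hPdef, of_apply, Pi.smul_apply, smul_eq_mul,
      Finset.sum_mul, Pi.star_apply]
    exact Finset.sum_congr rfl fun k _ => by ring
  have hP : P.PosSemidef := by
    refine posSemidef_iff_dotProduct_mulVec.mpr ⟨?_, ?_⟩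
    · ext j k
      simp [hPdef, conjTranspose_apply, mul_comm]
    · intro x
      rw [hPmul]
      set s : ℂ := star φv ⬝ᵥ x with hs
      have hxs : star x ⬝ᵥ φv = star s := by
        rw [star_dotProduct, ← hs]
      rw [dotProduct_smul, smul_eq_mul, hxs]
      exact mul_star_self_nonneg s
  set A : Matrix (Fin d) (Fin d) ℂ := Φ P with hAdef
  set B : Matrix (Fin d) (Fin d) ℂ := Ψ P with hBdef
  have hA : A.PosSemidef := hΦ P hP
  have hB : B.PosSemidef := hΨ P hP
  have hAB : A + B = P := hsum P
  have hsplit : ∀ x : Fin d → ℂ, star φv ⬝ᵥ x = 0 → A *ᵥ x = 0 := by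
    intro x hx
    have hPx : P *ᵥ x = 0 := by rw [hPmul, hx, zero_smul]
    have h1 : star x ⬝ᵥ A *ᵥ x + star x ⬝ᵥ B *ᵥ x = 0 := by
      rw [← dotProduct_add, ← add_mulVec, hAB, hPx, dotProduct_zero]
    have hzero : star x ⬝ᵥ A *ᵥ x = 0 := by
      refine le_antisymm ?_ (hA.dotProduct_mulVec_nonneg x)
      rw [eq_neg_of_add_eq_zero_left h1]
      exact neg_nonpos.mpr (hB.dotProduct_mulVec_nonneg x)
    exact (hA.dotProduct_mulVec_zero_iff x).mp hzero
  set c : ℂ := star φv ⬝ᵥ A *ᵥ φv with hc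
  have hc0 : 0 ≤ c := hA.dotProduct_mulVec_nonneg φv
  have hPφ : P *ᵥ φv = φv := by rw [hPmul, hnorm, one_smul]
  have hsum2 : c + star φv ⬝ᵥ B *ᵥ φv = 1 := by
    rw [hc, ← dotProduct_add, ← add_mulVec, hAB, hPφ, hnorm]
  have hc1 : c ≤ 1 := by
    rw [eq_sub_of_add_eq hsum2]
    exact sub_le_self _ (hB.dotProduct_mulVec_nonneg φv)
  have him : c.im = 0 := ((Complex.le_def.mp hc0).2).symm
  have hcre : (c.re : ℂ) = c := Complex.ext (by simp) (by simp [him])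
  -- A *ᵥ φv = c • φv
  set u : Fin d → ℂ := A *ᵥ φv - c • φv with hu
  have hu0 : star φv ⬝ᵥ u = 0 := by
    rw [hu, dotProduct_sub, dotProduct_smul, hnorm, ← hc]
    simp
  have hAu : A *ᵥ u = 0 := hsplit u hu0
  have h1 : star u ⬝ᵥ A *ᵥ φv = 0 := by
    rw [dotProduct_mulVec]
    have h2 : star u ᵥ* A = 0 := by
      conv_lhs => rw [← hA.1]
      rw [← star_mulVec, hAu, star_zero]
    rw [h2, zero_dotProduct]
  have h3 : star u ⬝ᵥ φv = 0 := by
    rw [star_dotProduct, hu0, star_zero]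
  have huu : star u ⬝ᵥ u = 0 := by
    have h5 : A *ᵥ φv = u + c • φv := by rw [hu]; abel
    rw [h5, dotProduct_add, dotProduct_smul, h3, smul_zero, add_zero] at h1
    exact h1
  have huzero : u = 0 := dotProduct_star_self_eq_zero.mp huu
  have hAφ : A *ᵥ φv = c • φv := by
    have := sub_eq_zero.mp (hu ▸ huzero)
    exact this
  -- entries
  have hAentry : ∀ j k, A j k = c * (φv j * star (φv k)) := by
    intro j k
    have hw : star φv ⬝ᵥ (Pi.single k 1 - star (φv k) • φv) = 0 := by
      rw [dotProduct_sub, dotProduct_smul, hnorm, dotProduct_single]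
      simp
    have hwz := hsplit _ hw
    have hdecomp : (Pi.single k 1 : Fin d → ℂ)
        = (Pi.single k 1 - star (φv k) • φv) + star (φv k) • φv := by abel
    have hek : A *ᵥ (Pi.single k 1 : Fin d → ℂ) = star (φv k) • (c • φv) := by
      rw [hdecomp, mulVec_add, hwz, zero_add, mulVec_smul, hAφ]
    have := congrFun hek j
    rw [mulVec_single] at this
    simpa [mul_comm, mul_left_comm, mul_assoc] using this
  refine ⟨c.re, ?_, ?_, ?_⟩
  · have := (Complex.le_def.mp hc0).1
    simpa using this
  · have := (Complex.le_def.mp hc1).1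
    simpa using this
  · ext j k
    have := hAentry j k
    simp only [hAdef, hPdef] at this ⊢
    rw [Matrix.smul_apply, Matrix.of_apply, this, hcre, smul_eq_mul]
end

section
/- Let d₁, d₂ be positive natural numbers, let H₁ = EuclideanSpace ℂ (Fin d₁), H₂ = EuclideanSpace ℂ (Fin d₂), and identify H₁ ⊗ H₂ with EuclideanSpace ℂ (Fin d₁ × Fin d₂) via (φ ⊗ ϕ)(i,j) = φ(i) · ϕ(j). Let U be a unitary operator on H₁ ⊗ H₂ such that for all vectors φ ∈ H₁ and ϕ ∈ H₂ there exist φ' ∈ H₁ and ϕ' ∈ H₂ with U(φ ⊗ ϕ) = φ' ⊗ ϕ'. Then one of the following holds: (A) there exist unitary operators V on H₁ and W on H₂ such that U(φ ⊗ ϕ) = (V φ) ⊗ (W ϕ) for all φ, ϕ; or (B) there exist surjective linear isometries V : H₂ → H₁ and W : H₁ → H₂ such that U(φ ⊗ ϕ) = (V ϕ) ⊗ (W φ) for all φ, ϕ (which can only occur when d₁ = d₂). -/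
open scoped ComplexOrder

/-- Elementary tensor of two Euclidean vectors, with `(φ ⊗ ϕ)(i,j) = φ i * ϕ j`. -/
noncomputable def tens {d₁ d₂ : ℕ} (φ : EuclideanSpace ℂ (Fin d₁))
    (ϕ : EuclideanSpace ℂ (Fin d₂)) : EuclideanSpace ℂ (Fin d₁ × Fin d₂) :=
  WithLp.toLp 2 (fun p : Fin d₁ × Fin d₂ => φ p.1 * ϕ p.2)

namespace PPU
open scoped InnerProductSpace
open Finset
variable {m n : ℕ}
lemma tens_apply (φ : EuclideanSpace ℂ (Fin m)) (ϕ : EuclideanSpace ℂ (Fin n)) (p) :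
    tens φ ϕ p = φ p.1 * ϕ p.2 := rfl

lemma tens_zero_left (ϕ : EuclideanSpace ℂ (Fin n)) : tens (0 : EuclideanSpace ℂ (Fin m)) ϕ = 0 := by
  ext p; simp [tens]

lemma tens_zero_right (φ : EuclideanSpace ℂ (Fin m)) : tens φ (0 : EuclideanSpace ℂ (Fin n)) = 0 := by
  ext p; simp [tens]

lemma tens_smul_left (c : ℂ) (φ : EuclideanSpace ℂ (Fin m)) (ϕ : EuclideanSpace ℂ (Fin n)) :
    tens (c • φ) ϕ = c • tens φ ϕ := by
  ext p; simp [tens]; ring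

lemma tens_smul_right (c : ℂ) (φ : EuclideanSpace ℂ (Fin m)) (ϕ : EuclideanSpace ℂ (Fin n)) :
    tens φ (c • ϕ) = c • tens φ ϕ := by
  ext p; simp [tens]; ring

lemma tens_smul_smul (c₁ c₂ : ℂ) (φ : EuclideanSpace ℂ (Fin m)) (ϕ : EuclideanSpace ℂ (Fin n)) :
    tens (c₁ • φ) (c₂ • ϕ) = (c₁ * c₂) • tens φ ϕ := by
  ext p; simp [tens]; ring

lemma tens_add_left (φ φ' : EuclideanSpace ℂ (Fin m)) (ϕ : EuclideanSpace ℂ (Fin n)) :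
    tens (φ + φ') ϕ = tens φ ϕ + tens φ' ϕ := by
  ext p; simp [tens]; ring

lemma tens_add_right (φ : EuclideanSpace ℂ (Fin m)) (ϕ ϕ' : EuclideanSpace ℂ (Fin n)) :
    tens φ (ϕ + ϕ') = tens φ ϕ + tens φ ϕ' := by
  ext p; simp [tens]; ring

lemma inner_tens (a c : EuclideanSpace ℂ (Fin m)) (b d : EuclideanSpace ℂ (Fin n)) :
    ⟪tens a b, tens c d⟫_ℂ = ⟪a, c⟫_ℂ * ⟪b, d⟫_ℂ := by
  simp only [PiLp.inner_apply, RCLike.inner_apply, tens_apply]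
  rw [Fintype.sum_prod_type, Finset.sum_mul_sum]
  apply Finset.sum_congr rfl
  intro i _
  apply Finset.sum_congr rfl
  intro j _
  simp [map_mul]; ring

lemma norm_tens (a : EuclideanSpace ℂ (Fin m)) (b : EuclideanSpace ℂ (Fin n)) :
    ‖tens a b‖ = ‖a‖ * ‖b‖ := by
  have h := inner_tens a a b b
  rw [inner_self_eq_norm_sq_to_K, inner_self_eq_norm_sq_to_K, inner_self_eq_norm_sq_to_K] at h
  have h3 : (‖tens a b‖ : ℝ) ^ 2 = (‖a‖ * ‖b‖) ^ 2 := by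
    rw [mul_pow]; exact_mod_cast h
  have := congrArg Real.sqrt h3
  rwa [Real.sqrt_sq (norm_nonneg _), Real.sqrt_sq (by positivity)] at this

/-- parallelism -/
def Par {k : ℕ} (x y : EuclideanSpace ℂ (Fin k)) : Prop := ∃ t : ℂ, t ≠ 0 ∧ y = t • x

lemma Par.refl {k : ℕ} (x : EuclideanSpace ℂ (Fin k)) : Par x x := ⟨1, one_ne_zero, (one_smul _ _).symm⟩

lemma Par.symm {k : ℕ} {x y : EuclideanSpace ℂ (Fin k)} (h : Par x y) : Par y x := by
  obtain ⟨t, ht, rfl⟩ := h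
  exact ⟨t⁻¹, inv_ne_zero ht, by rw [smul_smul, inv_mul_cancel₀ ht, one_smul]⟩

lemma Par.trans {k : ℕ} {x y z : EuclideanSpace ℂ (Fin k)} (h : Par x y) (h' : Par y z) : Par x z := by
  obtain ⟨t, ht, rfl⟩ := h
  obtain ⟨s, hs, rfl⟩ := h'
  exact ⟨s * t, mul_ne_zero hs ht, by rw [smul_smul]⟩

lemma Par.inner_ne_zero {k : ℕ} {x y : EuclideanSpace ℂ (Fin k)} (hx : x ≠ 0) (h : Par x y) :
    ⟪x, y⟫_ℂ ≠ 0 := by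
  obtain ⟨t, ht, rfl⟩ := h
  rw [inner_smul_right]
  exact mul_ne_zero ht fun h0 => hx (inner_self_eq_zero.mp h0)

lemma not_par_of_inner_zero {k : ℕ} {x y : EuclideanSpace ℂ (Fin k)} (hx : x ≠ 0)
    (h : ⟪x, y⟫_ℂ = 0) : ¬ Par x y := fun hp => hp.inner_ne_zero hx h

lemma par_of_dim_one {x y : EuclideanSpace ℂ (Fin 1)} (hx : x ≠ 0) (hy : y ≠ 0) : Par x y := by
  have hx0 : x 0 ≠ 0 := by
    intro h0; apply hx; ext i; fin_cases i; simpa using h0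
  refine ⟨y 0 / x 0, ?_, ?_⟩
  · have hy0 : y 0 ≠ 0 := by
      intro h0; apply hy; ext i; fin_cases i; simpa using h0
    exact div_ne_zero hy0 hx0
  · ext i; fin_cases i
    show y 0 = (y 0 / x 0) * x 0
    field_simp

/-- not parallel implies a nonzero 2x2 minor -/
lemma exists_minor {k : ℕ} {a c : EuclideanSpace ℂ (Fin k)} (ha : a ≠ 0)
    (hac : ∀ t : ℂ, c ≠ t • a) : ∃ i i', a i * c i' ≠ a i' * c i := by
  by_contra hcon
  push_neg at hcon
  obtain ⟨i₀, hi₀⟩ : ∃ i₀, a i₀ ≠ 0 := by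
    by_contra hc; push_neg at hc; exact ha (PiLp.ext fun i => by simp [hc i])
  apply hac (c i₀ / a i₀)
  ext i
  have := hcon i₀ i
  show c i = (c i₀ / a i₀) * a i
  field_simp
  linear_combination this

/-- The key rank-one lemma. -/
lemma key {a c x : EuclideanSpace ℂ (Fin m)} {b d y : EuclideanSpace ℂ (Fin n)}
    (h : tens a b + tens c d = tens x y)
    (ha : a ≠ 0) (hc : c ≠ 0) (hb : b ≠ 0) (hd : d ≠ 0)
    (hac : ∀ t : ℂ, c ≠ t • a) : ∃ t : ℂ, t ≠ 0 ∧ d = t • b := by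
  have hcomp : ∀ i j, a i * b j + c i * d j = x i * y j := by
    intro i j
    have := congrArg (fun v => v (i, j)) h
    simpa [tens_apply] using this
  obtain ⟨i, i', hmin⟩ := exists_minor ha hac
  set α : ℂ := x i' * a i - x i * a i' with hα
  set β : ℂ := x i * c i' - x i' * c i with hβ
  have hkey : ∀ j, α * b j = β * d j := by
    intro j
    have h1 := hcomp i j
    have h2 := hcomp i' j
    simp only [hα, hβ]
    linear_combination x i' * h1 - x i * h2
  by_cases hα0 : α = 0
  · by_cases hβ0 : β = 0
    · -- α = 0 and β = 0
      by_cases hxi : x i = 0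
      · by_cases hxi' : x i' = 0
        · -- both zero: a i * b = - c i * d etc
          have hrow : ∀ j, a i * b j = - (c i * d j) := by
            intro j; have := hcomp i j; rw [hxi] at this; linear_combination this
          by_cases hai : a i = 0
          · -- then c i * d j = 0 for all j, d ≠ 0 so c i = 0, minor contradiction
            exfalso
            have hci : c i = 0 := by
              by_contra hci
              apply hd
              ext j
              have h5 := hrow j
              rw [hai, zero_mul] at h5
              have h6 : c i * d j = 0 := by linear_combination h5
              have := (mul_eq_zero.mp h6).resolve_left hci
              simpa using this
            apply hmin
            rw [hai, hci, zero_mul, mul_zero]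
          · -- b = (-(c i)/(a i)) • d
            have hbd : b = (-(c i) / a i) • d := by
              ext j
              show b j = (-(c i) / a i) * d j
              have := hrow j
              field_simp
              linear_combination this
            have hs : (-(c i) / a i) ≠ 0 := by
              intro h0
              rw [h0, zero_smul] at hbd
              exact hb hbd
            exact ⟨(-(c i) / a i)⁻¹, inv_ne_zero hs, by rw [hbd, smul_smul, inv_mul_cancel₀ hs, one_smul]⟩
        · -- x i = 0, x i' ≠ 0
          exfalso
          have hai : a i = 0 := by
            have : x i' * a i = 0 := by rw [hα] at hα0; linear_combination hα0 + (a i') * hxi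
            exact (mul_eq_zero.mp this).resolve_left hxi'
          have hci : c i = 0 := by
            have : x i' * c i = 0 := by rw [hβ] at hβ0; linear_combination -hβ0 + (c i') * hxi
            exact (mul_eq_zero.mp this).resolve_left hxi'
          apply hmin
          rw [hai, hci, zero_mul, mul_zero]
      · -- x i ≠ 0
        exfalso
        apply hmin
        have e1 : a i' = x i' * a i / x i := by
          rw [hα] at hα0; field_simp; linear_combination -hα0
        have e2 : c i' = x i' * c i / x i := by
          rw [hβ] at hβ0; field_simp; linear_combination hβ0
        rw [e1, e2]; field_simp
    · -- α = 0, β ≠ 0 : d = 0 contradiction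
      exfalso
      apply hd
      ext j
      have h5 := hkey j
      rw [hα0, zero_mul] at h5
      have : d j = 0 := (mul_eq_zero.mp h5.symm).resolve_left hβ0
      simpa using this
  · by_cases hβ0 : β = 0
    · exfalso
      apply hb
      ext j
      have := hkey j
      rw [hβ0, zero_mul] at this
      have : b j = 0 := by
        rcases mul_eq_zero.mp this with h' | h'
        · exact absurd h' hα0
        · exact h'
      simpa using this
    · refine ⟨β⁻¹ * α, mul_ne_zero (inv_ne_zero hβ0) hα0, ?_⟩
      ext j
      show d j = (β⁻¹ * α) * b j
      have := hkey j
      field_simp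
      linear_combination -this

/-- pair dichotomy -/
lemma pair_dichotomy {a c : EuclideanSpace ℂ (Fin m)} {b d : EuclideanSpace ℂ (Fin n)}
    (h : ∃ x y, tens a b + tens c d = tens x y)
    (ha : a ≠ 0) (hc : c ≠ 0) (hb : b ≠ 0) (hd : d ≠ 0) :
    Par a c ∨ Par b d := by
  by_cases hp : ∃ t : ℂ, c = t • a
  · left
    obtain ⟨t, rfl⟩ := hp
    refine ⟨t, ?_, rfl⟩
    intro h0; rw [h0, zero_smul] at hc; exact hc rfl
  · right
    push_neg at hp
    obtain ⟨x, y, hxy⟩ := h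
    exact key hxy ha hc hb hd hp

/-- family dichotomy : all first components pairwise parallel or all second -/
lemma family_dichotomy {ι : Type*} {p q : ℕ} (a : ι → EuclideanSpace ℂ (Fin p))
    (b : ι → EuclideanSpace ℂ (Fin q))
    (ha : ∀ j, a j ≠ 0) (hb : ∀ j, b j ≠ 0)
    (hpair : ∀ j l, j ≠ l → Par (a j) (a l) ∨ Par (b j) (b l)) :
    (∀ j l, Par (a j) (a l)) ∨ (∀ j l, Par (b j) (b l)) := by
  by_cases hA : ∀ j l, Par (a j) (a l)
  · exact Or.inl hA
  · right
    push_neg at hA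
    obtain ⟨j₀, l₀, hj₀l₀⟩ := hA
    have hne : j₀ ≠ l₀ := by rintro rfl; exact hj₀l₀ (Par.refl _)
    have hb₀ : Par (b j₀) (b l₀) := (hpair j₀ l₀ hne).resolve_left hj₀l₀
    have main : ∀ j, Par (b j) (b j₀) := by
      intro j
      by_cases hjj₀ : j = j₀
      · subst hjj₀; exact Par.refl _
      by_contra hcon
      have haj : Par (a j) (a j₀) := by
        rcases hpair j j₀ hjj₀ with h | h
        · exact h
        · exact absurd h hcon
      by_cases hjl₀ : j = l₀
      · subst hjl₀
        exact hj₀l₀ haj.symm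
      rcases hpair j l₀ hjl₀ with h | h
      · exact hj₀l₀ (haj.symm.trans h)
      · exact hcon (h.trans hb₀.symm)
    intro j l
    exact (main j).trans (main l).symm

/-- expansion of a tensor in the canonical basis -/
lemma tens_expand (φ : EuclideanSpace ℂ (Fin m)) (ϕ : EuclideanSpace ℂ (Fin n)) :
    tens φ ϕ = ∑ p : Fin m × Fin n, (φ p.1 * ϕ p.2) •
      tens (EuclideanSpace.single p.1 1) (EuclideanSpace.single p.2 1) := by
  ext q
  rw [WithLp.ofLp_sum, Finset.sum_apply]
  simp only [PiLp.smul_apply, tens_apply, smul_eq_mul, EuclideanSpace.single_apply]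
  rw [Fintype.sum_prod_type]
  rw [Finset.sum_eq_single q.1]
  · rw [Finset.sum_eq_single q.2] <;> simp +contextual [eq_comm]
  · intro i _ hi
    apply Finset.sum_eq_zero
    intro j _
    simp [Ne.symm hi]
  · simp

/-- bilinear expansion of tens of sums -/
lemma tens_sum_sum {p q : ℕ} (c : Fin m → ℂ) (x : Fin m → EuclideanSpace ℂ (Fin p))
    (d : Fin n → ℂ) (y : Fin n → EuclideanSpace ℂ (Fin q)) :
    tens (∑ i, c i • x i) (∑ j, d j • y j)
      = ∑ r : Fin m × Fin n, (c r.1 * d r.2) • tens (x r.1) (y r.2) := by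
  ext s
  have h1 : (∑ i, c i • x i) s.1 = ∑ i, c i * x i s.1 := by
    rw [WithLp.ofLp_sum, Finset.sum_apply]; simp
  have h2 : (∑ j, d j • y j) s.2 = ∑ j, d j * y j s.2 := by
    rw [WithLp.ofLp_sum, Finset.sum_apply]; simp
  rw [WithLp.ofLp_sum, Finset.sum_apply]
  simp only [tens_apply, PiLp.smul_apply, smul_eq_mul]
  rw [h1, h2, Finset.sum_mul_sum, Fintype.sum_prod_type]
  apply Finset.sum_congr rfl; intro i _
  apply Finset.sum_congr rfl; intro j _
  ring

lemma smul_ne_of_inner_zero {k : ℕ} {x y : EuclideanSpace ℂ (Fin k)} (hy : y ≠ 0)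
    (h : ⟪x, y⟫_ℂ = 0) : ∀ t : ℂ, y ≠ t • x := by
  rintro t rfl
  rw [inner_smul_right] at h
  rcases mul_eq_zero.mp h with h' | h'
  · exact hy (by simp [h'])
  · rw [inner_self_eq_zero] at h'
    exact hy (by simp [h'])

lemma construct {p q : ℕ} (hm : 0 < m) (hn : 0 < n)
    (a : Fin m → Fin n → EuclideanSpace ℂ (Fin p))
    (b : Fin m → Fin n → EuclideanSpace ℂ (Fin q))
    (ha : ∀ i j, a i j ≠ 0) (hb : ∀ i j, b i j ≠ 0)
    (hinner : ∀ i j k l, (i, j) ≠ (k, l) → ⟪a i j, a k l⟫_ℂ * ⟪b i j, b k l⟫_ℂ = 0)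
    (hnorm : ∀ i j, ‖tens (a i j) (b i j)‖ = 1)
    (h4 : ∀ i j, i ≠ ⟨0, hm⟩ → j ≠ ⟨0, hn⟩ → ∃ x y,
      tens (a ⟨0, hm⟩ ⟨0, hn⟩) (b ⟨0, hm⟩ ⟨0, hn⟩) + tens (a ⟨0, hm⟩ j) (b ⟨0, hm⟩ j)
        + tens (a i ⟨0, hn⟩) (b i ⟨0, hn⟩) + tens (a i j) (b i j) = tens x y)
    (rowsL : ∀ i j l, Par (a i j) (a i l))
    (colsR : ∀ j i k, Par (b i j) (b k j)) :
    ∃ (u : Fin m → EuclideanSpace ℂ (Fin p)) (w : Fin n → EuclideanSpace ℂ (Fin q)),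
      Orthonormal ℂ u ∧ Orthonormal ℂ w ∧ ∀ i j, tens (a i j) (b i j) = tens (u i) (w j) := by
  set i0 : Fin m := ⟨0, hm⟩
  set j0 : Fin n := ⟨0, hn⟩
  set A : Fin m → EuclideanSpace ℂ (Fin p) := fun i => a i j0 with hA
  set B : Fin n → EuclideanSpace ℂ (Fin q) := fun j => b i0 j with hB
  have hAo : ∀ i k, i ≠ k → ⟪A i, A k⟫_ℂ = 0 := by
    intro i k hik
    have h0 := hinner i j0 k j0 (by simp [hik])
    have h1 : ⟪b i j0, b k j0⟫_ℂ ≠ 0 := (colsR j0 i k).inner_ne_zero (hb i j0)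
    exact (mul_eq_zero.mp h0).resolve_right h1
  have hBo : ∀ j l, j ≠ l → ⟪B j, B l⟫_ℂ = 0 := by
    intro j l hjl
    have h0 := hinner i0 j i0 l (by simp [hjl])
    have h1 : ⟪a i0 j, a i0 l⟫_ℂ ≠ 0 := (rowsL i0 j l).inner_ne_zero (ha i0 j)
    exact (mul_eq_zero.mp h0).resolve_left h1
  -- scalar decomposition
  have hs' : ∀ i j, ∃ s : ℂ, s ≠ 0 ∧ tens (a i j) (b i j) = s • tens (A i) (B j) := by
    intro i j
    obtain ⟨t, ht, hta⟩ := rowsL i j0 j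
    obtain ⟨r, hr, hrb⟩ := colsR j i0 i
    refine ⟨t * r, mul_ne_zero ht hr, ?_⟩
    rw [hta, hrb, tens_smul_left, tens_smul_right, smul_smul]
  choose s hs0 hsT using hs'
  have hBnorm : ∀ j, ⟪B j, B j⟫_ℂ ≠ 0 := fun j => (Par.refl _).inner_ne_zero (hb i0 j)
  -- key identity
  have hs4 : ∀ i j, s i j * s i0 j0 = s i j0 * s i0 j := by
    intro i j
    by_cases hi : i = i0
    · subst hi; ring
    by_cases hj : j = j0
    · subst hj; ring
    obtain ⟨x, y, hxy⟩ := h4 i j hi hj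
    rw [hsT i0 j0, hsT i0 j, hsT i j0, hsT i j] at hxy
    have hre : (s i0 j0 • tens (A i0) (B j0) + s i0 j • tens (A i0) (B j))
        + (s i j0 • tens (A i) (B j0) + s i j • tens (A i) (B j)) = tens x y := by
      rw [← hxy]; abel
    have hre2 : tens (A i0) (s i0 j0 • B j0 + s i0 j • B j)
        + tens (A i) (s i j0 • B j0 + s i j • B j) = tens x y := by
      rw [← hre, tens_add_right, tens_add_right, tens_smul_right, tens_smul_right,
        tens_smul_right, tens_smul_right]
    have hv0 : ∀ (c1 c2 : ℂ), c1 ≠ 0 → c1 • B j0 + c2 • B j ≠ 0 := by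
      intro c1 c2 hc1 hcon
      have : ⟪B j0, c1 • B j0 + c2 • B j⟫_ℂ = c1 * ⟪B j0, B j0⟫_ℂ := by
        rw [inner_add_right, inner_smul_right, inner_smul_right, hBo j0 j (Ne.symm hj)]
        ring
      rw [hcon, inner_zero_right] at this
      exact (mul_ne_zero hc1 (hBnorm j0)) this.symm
    have hnp : ∀ t : ℂ, A i ≠ t • A i0 :=
      smul_ne_of_inner_zero (ha i j0) (hAo i0 i (Ne.symm hi))
    obtain ⟨t, ht, htv⟩ := key hre2 (ha i0 j0) (ha i j0) (hv0 _ _ (hs0 i0 j0)) (hv0 _ _ (hs0 i j0)) hnp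
    -- extract coefficients
    have e1 : s i j0 = t * s i0 j0 := by
      have := congrArg (fun v => ⟪B j0, v⟫_ℂ) htv
      simp only [inner_add_right, inner_smul_right, hBo j0 j (Ne.symm hj)] at this
      have h5 : s i j0 * ⟪B j0, B j0⟫_ℂ = (t * s i0 j0) * ⟪B j0, B j0⟫_ℂ := by
        linear_combination this
      exact mul_right_cancel₀ (hBnorm j0) h5
    have e2 : s i j = t * s i0 j := by
      have := congrArg (fun v => ⟪B j, v⟫_ℂ) htv
      simp only [inner_add_right, inner_smul_right, hBo j j0 hj] at this
      have h5 : s i j * ⟪B j, B j⟫_ℂ = (t * s i0 j) * ⟪B j, B j⟫_ℂ := by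
        linear_combination this
      exact mul_right_cancel₀ (hBnorm j) h5
    rw [e1, e2]; ring
  -- preliminary families
  set u' : Fin m → EuclideanSpace ℂ (Fin p) := fun i => (s i j0 * (s i0 j0)⁻¹) • A i with hu'
  set w' : Fin n → EuclideanSpace ℂ (Fin q) := fun j => s i0 j • B j with hw'
  have hT : ∀ i j, tens (a i j) (b i j) = tens (u' i) (w' j) := by
    intro i j
    rw [hsT, hu', hw']
    simp only
    rw [tens_smul_left, tens_smul_right, smul_smul]
    have h00 := hs0 i0 j0
    have hsc : s i j0 * (s i0 j0)⁻¹ * s i0 j = s i j := by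
      field_simp
      linear_combination - hs4 i j
    rw [hsc]
  have hN : ∀ i j, ‖u' i‖ * ‖w' j‖ = 1 := by
    intro i j
    rw [← norm_tens, ← hT, hnorm]
  set c : ℝ := ‖w' j0‖ with hc
  have hc0 : c ≠ 0 := by
    intro h0
    have := hN i0 j0
    rw [← hc, h0, mul_zero] at this
    norm_num at this
  have hcpos : 0 < c := lt_of_le_of_ne (norm_nonneg _) (Ne.symm hc0)
  have hcc0 : (c : ℂ) ≠ 0 := Complex.ofReal_ne_zero.mpr hc0
  set u : Fin m → EuclideanSpace ℂ (Fin p) := fun i => (c : ℂ) • u' i with hu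
  set w : Fin n → EuclideanSpace ℂ (Fin q) := fun j => ((c : ℂ)⁻¹) • w' j with hw
  have hwn : ∀ j, ‖w' j‖ = c := by
    intro j
    have h1 := hN i0 j
    have h2 := hN i0 j0
    have hu0 : ‖u' i0‖ ≠ 0 := by
      intro h0; rw [h0, zero_mul] at h2; norm_num at h2
    exact mul_left_cancel₀ hu0 (h1.trans h2.symm)
  refine ⟨u, w, ⟨?_, ?_⟩, ⟨?_, ?_⟩, ?_⟩
  · intro i
    have : ‖u i‖ = c * ‖u' i‖ := by
      rw [hu]; simp [norm_smul, abs_of_pos hcpos]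
    rw [this, mul_comm]
    exact hN i j0
  · intro i k hik
    simp only [hu, hu']
    rw [inner_smul_left, inner_smul_right, inner_smul_left, inner_smul_right,
      hAo i k hik]
    ring
  · intro j
    have : ‖w j‖ = c⁻¹ * ‖w' j‖ := by
      rw [hw]; simp [norm_smul, abs_of_pos hcpos]
    rw [this, hwn j, inv_mul_cancel₀ hc0]
  · intro j l hjl
    simp only [hw, hw']
    rw [inner_smul_left, inner_smul_right, inner_smul_left, inner_smul_right,
      hBo j l hjl]
    ring
  · intro i j
    rw [hT i j]
    have h1 : tens (u i) (w j) = ((c : ℂ) * ((c : ℂ))⁻¹) • tens (u' i) (w' j) := by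
      rw [hu, hw]
      exact tens_smul_smul _ _ _ _
    rw [h1, mul_inv_cancel₀ hcc0, one_smul]

lemma nomix {p q : ℕ}
    (a : Fin m → Fin n → EuclideanSpace ℂ (Fin p))
    (b : Fin m → Fin n → EuclideanSpace ℂ (Fin q))
    (ha : ∀ i j, a i j ≠ 0) (hb : ∀ i j, b i j ≠ 0)
    (hinner : ∀ i j k l, (i, j) ≠ (k, l) → ⟪a i j, a k l⟫_ℂ * ⟪b i j, b k l⟫_ℂ = 0)
    (h4 : ∀ i k j l, i ≠ k → j ≠ l → ∃ x y,
      tens (a i j) (b i j) + tens (a i l) (b i l) + tens (a k j) (b k j) + tens (a k l) (b k l)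
        = tens x y)
    (hpaircol : ∀ j i k, i ≠ k → Par (a i j) (a k j) ∨ Par (b i j) (b k j))
    {i k : Fin m} (hik : i ≠ k) {j l : Fin n} (hjl : j ≠ l)
    (hLi : ∀ j' l', Par (a i j') (a i l'))
    (hRk : ∀ j' l', Par (b k j') (b k l')) : False := by
  have hb_i_perp : ∀ j' l', j' ≠ l' → ⟪b i j', b i l'⟫_ℂ = 0 := by
    intro j' l' h
    exact (mul_eq_zero.mp (hinner i j' i l' (by simp [h]))).resolve_left
      ((hLi j' l').inner_ne_zero (ha i j'))
  have ha_k_perp : ∀ j' l', j' ≠ l' → ⟪a k j', a k l'⟫_ℂ = 0 := by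
    intro j' l' h
    exact (mul_eq_zero.mp (hinner k j' k l' (by simp [h]))).resolve_right
      ((hRk j' l').inner_ne_zero (hb k j'))
  have beta : ∀ j' l', j' ≠ l' → Par (b i j') (b k j') → Par (a i l') (a k l') → False := by
    intro j l hjl hbpar hapar
    have hbparinner := hbpar.inner_ne_zero (hb i j)
    obtain ⟨α, hα0, hαe⟩ := hLi j l
    obtain ⟨α', hα'0, hα'e⟩ := hapar
    obtain ⟨γ, hγ0, hγe⟩ := hbpar
    obtain ⟨δ, hδ0, hδe⟩ := hRk j l
    obtain ⟨x, y, hxy⟩ := h4 i k j l hik hjl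
    have hTij : tens (a i j) (b i j) = tens (a i j) (b i j) := rfl
    have hTil : tens (a i l) (b i l) = tens (a i j) (α • b i l) := by
      rw [hαe, tens_smul_left, tens_smul_right]
    have hTkl : tens (a k l) (b k l) = tens (a i j) ((α' * α * (δ * γ)) • b i j) := by
      rw [hα'e, hαe, hδe, hγe]
      ext pt
      simp only [tens_apply, PiLp.smul_apply, smul_eq_mul]
      ring
    have hTkj : tens (a k j) (b k j) = tens (a k j) (γ • b i j) := by rw [hγe]
    rw [hTil, hTkl, hTkj] at hxy
    have hre : tens (a i j) ((1 + α' * α * (δ * γ)) • b i j + α • b i l)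
        + tens (a k j) (γ • b i j) = tens x y := by
      rw [← hxy, tens_add_right, add_smul, one_smul, tens_add_right]
      abel
    have hblperp : ⟪b i l, b i j⟫_ℂ = 0 := by
      rw [← inner_conj_symm, hb_i_perp j l hjl, map_zero]
    have hbl0 : ⟪b i l, b i l⟫_ℂ ≠ 0 := (Par.refl _).inner_ne_zero (hb i l)
    have hv0 : (1 + α' * α * (δ * γ)) • b i j + α • b i l ≠ 0 := by
      intro hcon
      have : ⟪b i l, (1 + α' * α * (δ * γ)) • b i j + α • b i l⟫_ℂ = α * ⟪b i l, b i l⟫_ℂ := by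
        rw [inner_add_right, inner_smul_right, inner_smul_right, hblperp]
        ring
      rw [hcon, inner_zero_right] at this
      exact (mul_ne_zero hα0 hbl0) this.symm
    have hakjA : ⟪a i j, a k j⟫_ℂ = 0 :=
      (mul_eq_zero.mp (hinner i j k j (by simp [hik]))).resolve_right
        hbparinner
    have hnp : ∀ t : ℂ, a k j ≠ t • a i j := smul_ne_of_inner_zero (ha k j) hakjA
    obtain ⟨t, ht0, hte⟩ := key hre (ha i j) (ha k j) hv0
      (smul_ne_zero hγ0 (hb i j)) hnp
    have hcon := congrArg (fun v => ⟪b i l, v⟫_ℂ) hte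
    simp only [inner_smul_right, inner_add_right, hblperp] at hcon
    rw [mul_zero] at hcon
    have : t * (α * ⟪b i l, b i l⟫_ℂ) = 0 := by linear_combination -hcon
    exact (mul_ne_zero ht0 (mul_ne_zero hα0 hbl0)) this
  rcases hpaircol j i k hik with hLj | hRj
  · rcases hpaircol l i k hik with hLl | hRl
    · exact not_par_of_inner_zero (ha k j) (ha_k_perp j l hjl)
        (hLj.symm.trans ((hLi j l).trans hLl))
    · exact beta l j (Ne.symm hjl) hRl hLj
  · rcases hpaircol l i k hik with hLl | hRl
    · exact beta j l hjl hRj hLl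
    · exact not_par_of_inner_zero (hb i j) (hb_i_perp j l hjl)
        (hRj.trans ((hRk j l).trans hRl.symm))

lemma par_of_dim_one' {k : ℕ} (hk : k = 1) {x y : EuclideanSpace ℂ (Fin k)}
    (hx : x ≠ 0) (hy : y ≠ 0) : Par x y := by
  subst hk; exact par_of_dim_one hx hy

lemma card_le_of_pairwise_orth {k : ℕ} {ι : Type*} [Fintype ι]
    (v : ι → EuclideanSpace ℂ (Fin k)) (hv : ∀ x, v x ≠ 0)
    (ho : ∀ x y, x ≠ y → ⟪v x, v y⟫_ℂ = 0) : Fintype.card ι ≤ k := by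
  set u : ι → EuclideanSpace ℂ (Fin k) := fun x => ((‖v x‖ : ℂ))⁻¹ • v x with hu
  have honu : Orthonormal ℂ u := by
    constructor
    · intro x
      rw [hu]
      simp only [norm_smul]
      rw [norm_inv, Complex.norm_real, norm_norm]
      have : ‖v x‖ ≠ 0 := norm_ne_zero_iff.mpr (hv x)
      field_simp
    · intro x y hxy
      simp only [hu, inner_smul_left, inner_smul_right, ho x y hxy, mul_zero]
  have := honu.linearIndependent.fintype_card_le_finrank
  rwa [finrank_euclideanSpace_fin] at this

end PPU

open PPU

/-- A unitary mapping every product vector to a product vector is either a tensor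
product of unitaries or a swap composed with surjective isometries (the latter
only possible in equal dimensions). -/
theorem product_preserving_unitary_structure
    (d₁ d₂ : ℕ) (h₁ : 0 < d₁) (h₂ : 0 < d₂)
    (U : EuclideanSpace ℂ (Fin d₁ × Fin d₂) ≃ₗᵢ[ℂ] EuclideanSpace ℂ (Fin d₁ × Fin d₂))
    (hU : ∀ (φ : EuclideanSpace ℂ (Fin d₁)) (ϕ : EuclideanSpace ℂ (Fin d₂)),
      ∃ (φ' : EuclideanSpace ℂ (Fin d₁)) (ϕ' : EuclideanSpace ℂ (Fin d₂)),
        U (tens φ ϕ) = tens φ' ϕ') :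
    (∃ (V : EuclideanSpace ℂ (Fin d₁) ≃ₗᵢ[ℂ] EuclideanSpace ℂ (Fin d₁))
       (W : EuclideanSpace ℂ (Fin d₂) ≃ₗᵢ[ℂ] EuclideanSpace ℂ (Fin d₂)),
        ∀ φ ϕ, U (tens φ ϕ) = tens (V φ) (W ϕ)) ∨
    ((∃ (V : EuclideanSpace ℂ (Fin d₂) ≃ₗᵢ[ℂ] EuclideanSpace ℂ (Fin d₁))
       (W : EuclideanSpace ℂ (Fin d₁) ≃ₗᵢ[ℂ] EuclideanSpace ℂ (Fin d₂)),
        ∀ φ ϕ, U (tens φ ϕ) = tens (V ϕ) (W φ)) ∧ d₁ = d₂) := by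
  classical
  open scoped InnerProductSpace in
  choose a b hP using fun (i : Fin d₁) (j : Fin d₂) =>
    hU (EuclideanSpace.single i 1) (EuclideanSpace.single j 1)
  have hnorm : ∀ i j, ‖tens (a i j) (b i j)‖ = 1 := by
    intro i j
    rw [← hP, LinearIsometryEquiv.norm_map, PPU.norm_tens]
    simp [EuclideanSpace.norm_single]
  have ha : ∀ i j, a i j ≠ 0 := by
    intro i j h0
    have := hnorm i j
    rw [h0, PPU.tens_zero_left, norm_zero] at this
    norm_num at this
  have hb : ∀ i j, b i j ≠ 0 := by
    intro i j h0
    have := hnorm i j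
    rw [h0, PPU.tens_zero_right, norm_zero] at this
    norm_num at this
  have hinner : ∀ i j k l, (i, j) ≠ (k, l) →
      (inner ℂ (a i j) (a k l) : ℂ) * (inner ℂ (b i j) (b k l) : ℂ) = 0 := by
    intro i j k l hne
    rw [← PPU.inner_tens, ← hP, ← hP, LinearIsometryEquiv.inner_map_map, PPU.inner_tens]
    have : i ≠ k ∨ j ≠ l := by
      by_contra hc
      push_neg at hc
      exact hne (by rw [hc.1, hc.2])
    rcases this with h | h
    · rw [EuclideanSpace.inner_single_left]
      simp [EuclideanSpace.single_apply, h]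
    · rw [mul_comm, EuclideanSpace.inner_single_left]
      simp [EuclideanSpace.single_apply, h]
  have h2row : ∀ i j l, ∃ x y, tens (a i j) (b i j) + tens (a i l) (b i l) = tens x y := by
    intro i j l
    obtain ⟨x, y, hxy⟩ := hU (EuclideanSpace.single i 1)
      (EuclideanSpace.single j 1 + EuclideanSpace.single l 1)
    exact ⟨x, y, by rw [← hxy, PPU.tens_add_right, map_add, hP, hP]⟩
  have h2col : ∀ j i k, ∃ x y, tens (a i j) (b i j) + tens (a k j) (b k j) = tens x y := by
    intro j i k
    obtain ⟨x, y, hxy⟩ := hU (EuclideanSpace.single i 1 + EuclideanSpace.single k 1)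
      (EuclideanSpace.single j 1)
    exact ⟨x, y, by rw [← hxy, PPU.tens_add_left, map_add, hP, hP]⟩
  have h4A : ∀ i k j l, ∃ x y,
      tens (a i j) (b i j) + tens (a i l) (b i l) + tens (a k j) (b k j)
        + tens (a k l) (b k l) = tens x y := by
    intro i k j l
    obtain ⟨x, y, hxy⟩ := hU (EuclideanSpace.single i 1 + EuclideanSpace.single k 1)
      (EuclideanSpace.single j 1 + EuclideanSpace.single l 1)
    refine ⟨x, y, ?_⟩
    rw [← hxy, PPU.tens_add_left, PPU.tens_add_right, PPU.tens_add_right,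
      map_add, map_add, map_add, hP, hP, hP, hP]
    abel
  have hpairrow : ∀ i j l, j ≠ l → Par (a i j) (a i l) ∨ Par (b i j) (b i l) := by
    intro i j l _
    exact PPU.pair_dichotomy (h2row i j l) (ha i j) (ha i l) (hb i j) (hb i l)
  have hpaircol : ∀ j i k, i ≠ k → Par (a i j) (a k j) ∨ Par (b i j) (b k j) := by
    intro j i k _
    exact PPU.pair_dichotomy (h2col j i k) (ha i j) (ha k j) (hb i j) (hb k j)
  have rowtype : ∀ i, (∀ j l, Par (a i j) (a i l)) ∨ (∀ j l, Par (b i j) (b i l)) :=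
    fun i => PPU.family_dichotomy (a i) (b i) (ha i) (hb i) (hpairrow i)
  have coltype : ∀ j, (∀ i k, Par (a i j) (a k j)) ∨ (∀ i k, Par (b i j) (b k j)) :=
    fun j => PPU.family_dichotomy (fun i => a i j) (fun i => b i j)
      (fun i => ha i j) (fun i => hb i j) (hpaircol j)
  have main : ((∀ i j l, Par (a i j) (a i l)) ∧ (∀ j i k, Par (b i j) (b k j))) ∨
      ((∀ i j l, Par (b i j) (b i l)) ∧ (∀ j i k, Par (a i j) (a k j))) := by
    by_cases hd1 : d₁ = 1
    · left
      constructor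
      · intro i j l; exact PPU.par_of_dim_one' hd1 (ha i j) (ha i l)
      · intro j i k
        have : i = k := Fin.ext (by omega)
        subst this; exact Par.refl _
    · by_cases hd2 : d₂ = 1
      · left
        constructor
        · intro i j l
          have : j = l := Fin.ext (by omega)
          subst this; exact Par.refl _
        · intro j i k; exact PPU.par_of_dim_one' hd2 (hb i j) (hb k j)
      · -- both dimensions at least 2
        have hj01 : (⟨0, by omega⟩ : Fin d₂) ≠ ⟨1, by omega⟩ :=
          Fin.ne_of_val_ne (by norm_num)
        by_cases hall : ∀ i, (∀ j l, Par (a i j) (a i l))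
        · left
          refine ⟨hall, ?_⟩
          intro j
          refine (coltype j).resolve_left ?_
          intro hColL
          have hborth : ∀ (x y : Fin d₁ × Fin d₂), x ≠ y →
              (inner ℂ (b x.1 x.2) (b y.1 y.2) : ℂ) = 0 := by
            rintro ⟨i, l⟩ ⟨k, l'⟩ hne
            have hpar : Par (a i l) (a k l') :=
              ((hall i l j).trans ((hColL i k).trans (hall k j l')))
            exact (mul_eq_zero.mp (hinner i l k l' hne)).resolve_left
              (hpar.inner_ne_zero (ha i l))
          have hcard := PPU.card_le_of_pairwise_orth
            (fun x : Fin d₁ × Fin d₂ => b x.1 x.2) (fun x => hb x.1 x.2) hborth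
          simp only [Fintype.card_prod, Fintype.card_fin] at hcard
          have : 2 ≤ d₁ := by omega
          nlinarith
        · right
          obtain ⟨i₁, hi₁⟩ := not_forall.mp hall
          have hRi₁ : ∀ j l, Par (b i₁ j) (b i₁ l) := (rowtype i₁).resolve_left hi₁
          have rowsR : ∀ i j l, Par (b i j) (b i l) := by
            intro i
            rcases rowtype i with hL | hR
            · exfalso
              have hne : i ≠ i₁ := by rintro rfl; exact hi₁ hL
              exact PPU.nomix a b ha hb hinner (fun i k j l _ _ => h4A i k j l)
                hpaircol hne hj01 hL hRi₁
            · exact hR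
          refine ⟨rowsR, ?_⟩
          intro j
          refine (coltype j).resolve_right ?_
          intro hColR
          have haorth : ∀ (x y : Fin d₁ × Fin d₂), x ≠ y →
              (inner ℂ (a x.1 x.2) (a y.1 y.2) : ℂ) = 0 := by
            rintro ⟨i, l⟩ ⟨k, l'⟩ hne
            have hpar : Par (b i l) (b k l') :=
              ((rowsR i l j).trans ((hColR i k).trans (rowsR k j l')))
            exact (mul_eq_zero.mp (hinner i l k l' hne)).resolve_right
              (hpar.inner_ne_zero (hb i l))
          have hcard := PPU.card_le_of_pairwise_orth
            (fun x : Fin d₁ × Fin d₂ => a x.1 x.2) (fun x => ha x.1 x.2) haorth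
          simp only [Fintype.card_prod, Fintype.card_fin] at hcard
          have : 2 ≤ d₂ := by omega
          nlinarith
  rcases main with ⟨rowsL, colsR⟩ | ⟨rowsR, colsL⟩
  · -- Case A
    obtain ⟨u, w, honu, honw, hT⟩ := PPU.construct h₁ h₂ a b ha hb hinner hnorm
      (fun i j _ _ => h4A ⟨0, h₁⟩ i ⟨0, h₂⟩ j) rowsL colsR
    left
    have hsp1 : ⊤ ≤ Submodule.span ℂ (Set.range u) :=
      (honu.linearIndependent.span_eq_top_of_card_eq_finrank'
        (by simp [finrank_euclideanSpace_fin])).ge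
    have hsp2 : ⊤ ≤ Submodule.span ℂ (Set.range w) :=
      (honw.linearIndependent.span_eq_top_of_card_eq_finrank'
        (by simp [finrank_euclideanSpace_fin])).ge
    refine ⟨(OrthonormalBasis.mk honu hsp1).repr.symm,
      (OrthonormalBasis.mk honw hsp2).repr.symm, ?_⟩
    intro φ ϕ
    have hVφ : (OrthonormalBasis.mk honu hsp1).repr.symm φ = ∑ i, φ i • u i := by
      rw [← OrthonormalBasis.sum_repr_symm]
      exact Finset.sum_congr rfl fun i _ => by rw [OrthonormalBasis.coe_mk]
    have hWϕ : (OrthonormalBasis.mk honw hsp2).repr.symm ϕ = ∑ j, ϕ j • w j := by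
      rw [← OrthonormalBasis.sum_repr_symm]
      exact Finset.sum_congr rfl fun j _ => by rw [OrthonormalBasis.coe_mk]
    rw [hVφ, hWϕ, PPU.tens_sum_sum, PPU.tens_expand φ ϕ, map_sum]
    exact Finset.sum_congr rfl fun p _ => by rw [map_smul, hP p.1 p.2, hT p.1 p.2]
  · -- Case B
    obtain ⟨u, w, honu, honw, hT⟩ := PPU.construct h₂ h₁ (fun j i => a i j) (fun j i => b i j)
      (fun j i => ha i j) (fun j i => hb i j)
      (fun j i l k hne => hinner i j k l (by
        intro hc
        apply hne
        rw [Prod.mk.injEq] at hc ⊢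
        exact ⟨hc.2, hc.1⟩))
      (fun j i => hnorm i j)
      (fun j i _ _ => by
        obtain ⟨x, y, hxy⟩ := h4A ⟨0, h₁⟩ i ⟨0, h₂⟩ j
        exact ⟨x, y, by rw [← hxy]; abel⟩)
      (fun j i k => colsL j i k)
      (fun i j k => rowsR i j k)
    have hle1 : d₂ ≤ d₁ := by
      have := honu.linearIndependent.fintype_card_le_finrank
      simpa [finrank_euclideanSpace_fin] using this
    have hle2 : d₁ ≤ d₂ := by
      have := honw.linearIndependent.fintype_card_le_finrank
      simpa [finrank_euclideanSpace_fin] using this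
    have heq : d₁ = d₂ := le_antisymm hle2 hle1
    right
    have hsp1 : ⊤ ≤ Submodule.span ℂ (Set.range u) :=
      (honu.linearIndependent.span_eq_top_of_card_eq_finrank'
        (by simp [finrank_euclideanSpace_fin, heq])).ge
    have hsp2 : ⊤ ≤ Submodule.span ℂ (Set.range w) :=
      (honw.linearIndependent.span_eq_top_of_card_eq_finrank'
        (by simp [finrank_euclideanSpace_fin, heq])).ge
    refine ⟨⟨(OrthonormalBasis.mk honu hsp1).repr.symm,
      (OrthonormalBasis.mk honw hsp2).repr.symm, ?_⟩, heq⟩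
    intro φ ϕ
    have hVϕ : (OrthonormalBasis.mk honu hsp1).repr.symm ϕ = ∑ j, ϕ j • u j := by
      rw [← OrthonormalBasis.sum_repr_symm]
      exact Finset.sum_congr rfl fun j _ => by rw [OrthonormalBasis.coe_mk]
    have hWφ : (OrthonormalBasis.mk honw hsp2).repr.symm φ = ∑ i, φ i • w i := by
      rw [← OrthonormalBasis.sum_repr_symm]
      exact Finset.sum_congr rfl fun i _ => by rw [OrthonormalBasis.coe_mk]
    have lhs : U (tens φ ϕ) = ∑ p : Fin d₁ × Fin d₂, (φ p.1 * ϕ p.2) • tens (u p.2) (w p.1) := by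
      rw [PPU.tens_expand φ ϕ, map_sum]
      exact Finset.sum_congr rfl fun p _ => by rw [map_smul, hP p.1 p.2, hT p.2 p.1]
    rw [lhs, hVϕ, hWφ, PPU.tens_sum_sum]
    exact Fintype.sum_equiv (Equiv.prodComm (Fin d₁) (Fin d₂)) _ _
      (fun p => by simp [Equiv.prodComm]; rw [mul_comm])
end

section
/- Let d be a positive natural number, let T ∈ Matrix (Fin d) (Fin d) ℂ be positive semidefinite, and let ψ ∈ EuclideanSpace ℂ (Fin d) be a unit vector with associated rank-one projection P_ψ (entries (P_ψ)_{jk} = ψ_j · conj(ψ_k)). Then there exists a real number λ > 0 such that T − λ • P_ψ is positive semidefinite if and only if ψ lies in the range of T (equivalently, in the range of the positive semidefinite square root T^{1/2}). -/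
open scoped ComplexOrder

open Matrix in
private lemma herm_dot_shift {d : ℕ} {T : Matrix (Fin d) (Fin d) ℂ} (hT : T.IsHermitian)
    (x y : Fin d → ℂ) : star x ⬝ᵥ T *ᵥ y = star (T *ᵥ x) ⬝ᵥ y := by
  rw [dotProduct_mulVec, star_mulVec, hT.eq]

open Matrix in
private lemma dot_star_self {d : ℕ} (w : Fin d → ℂ) :
    star w ⬝ᵥ w = ((∑ i, Complex.normSq (w i) : ℝ) : ℂ) := by
  simp [dotProduct, Complex.normSq_eq_conj_mul_self]

open Matrix in
private lemma dot_rankone {d : ℕ} (ψ v : Fin d → ℂ) :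
    star v ⬝ᵥ (Matrix.of fun j k => ψ j * star (ψ k)) *ᵥ v
      = star (star ψ ⬝ᵥ v) * (star ψ ⬝ᵥ v) := by
  have : star v ⬝ᵥ (Matrix.of fun j k => ψ j * star (ψ k)) *ᵥ v
      = (star v ⬝ᵥ ψ) * (star ψ ⬝ᵥ v) := by
    simp only [Matrix.mulVec, dotProduct, Matrix.of_apply, Pi.star_apply,
      Finset.sum_mul_sum, Finset.mul_sum, Finset.sum_mul]
    rw [Finset.sum_comm]
    exact Finset.sum_congr rfl fun j _ => Finset.sum_congr rfl fun k _ => by ring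
  rw [this, star_dotProduct]

open Matrix in
private lemma cs_normSq {d : ℕ} (y w : Fin d → ℂ) :
    Complex.normSq (star y ⬝ᵥ w) ≤ (∑ i, Complex.normSq (y i)) * (∑ i, Complex.normSq (w i)) := by
  have h := norm_inner_le_norm (𝕜 := ℂ) ((WithLp.equiv 2 (Fin d → ℂ)).symm y)
    ((WithLp.equiv 2 (Fin d → ℂ)).symm w)
  rw [show inner ℂ ((WithLp.equiv 2 (Fin d → ℂ)).symm y) ((WithLp.equiv 2 (Fin d → ℂ)).symm w)
      = star y ⬝ᵥ w from by rw [dotProduct_comm]; rfl] at h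
  have h2 : ‖star y ⬝ᵥ w‖ ^ 2 ≤ (‖(WithLp.equiv 2 (Fin d → ℂ)).symm y‖ * ‖(WithLp.equiv 2 (Fin d → ℂ)).symm w‖) ^ 2 :=
    pow_le_pow_left₀ (norm_nonneg _) h 2
  rw [mul_pow] at h2
  have hn : ∀ u : Fin d → ℂ, ‖(WithLp.equiv 2 (Fin d → ℂ)).symm u‖ ^ 2 = ∑ i, Complex.normSq (u i) := by
    intro u
    rw [EuclideanSpace.norm_eq, Real.sq_sqrt (by positivity)]
    exact Finset.sum_congr rfl fun i _ => by
      rw [Complex.normSq_eq_norm_sq]; rfl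
  rw [hn, hn] at h2
  calc Complex.normSq (star y ⬝ᵥ w) = ‖star y ⬝ᵥ w‖ ^ 2 := by
        rw [Complex.normSq_eq_norm_sq]
    _ ≤ _ := h2

open scoped MatrixOrder in
open Matrix in
/-- Hadjisavvas' characterization: a pure state `P_ψ` can be subtracted (with some
positive weight) from a positive semidefinite matrix `T` keeping positivity iff
`ψ` lies in the range of `T`. -/
theorem pure_component_iff_mem_range
    (d : ℕ) (hd : 0 < d) (T : Matrix (Fin d) (Fin d) ℂ) (hT : T.PosSemidef)
    (ψ : EuclideanSpace ℂ (Fin d)) (hψ : ‖ψ‖ = 1) :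
    (∃ lam : ℝ, 0 < lam ∧
        (T - (lam : ℂ) • (Matrix.of fun j k => ψ j * star (ψ k))).PosSemidef) ↔
      (∃ x : Fin d → ℂ, T.mulVec x = ψ) := by
  have hψ0 : ψ ≠ 0 := fun h => by simp [h] at hψ
  constructor
  · rintro ⟨lam, hlam, hherm, hposd⟩
    set K : Submodule ℂ (EuclideanSpace ℂ (Fin d)) :=
      LinearMap.range (Matrix.toEuclideanLin T) with hK
    obtain ⟨y, hy, z, hz, hyz⟩ := K.exists_add_mem_mem_orthogonal ψ
    set z' : Fin d → ℂ := WithLp.equiv 2 (Fin d → ℂ) z with hz'def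
    have hTz : T.mulVec z' = 0 := by
      rw [← dotProduct_star_self_eq_zero (v := T.mulVec z')]
      have h1 : (inner ℂ (Matrix.toEuclideanLin T
          ((WithLp.equiv 2 (Fin d → ℂ)).symm (T.mulVec z'))) z : ℂ) = 0 :=
        (K.mem_orthogonal z).1 hz _ ⟨_, rfl⟩
      have h2 : star (T.mulVec (T.mulVec z')) ⬝ᵥ z' = 0 := by
        rw [dotProduct_comm]
        simp [EuclideanSpace.inner_eq_star_dotProduct, Matrix.toEuclideanLin_apply] at h1
        rw [Matrix.mulVec_mulVec]
        exact h1
      rw [← herm_dot_shift hT.1] at h2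
      exact h2
    have haux : ∀ u : ℂ, (0 : ℂ) ≤ (0 : ℂ) - (lam : ℂ) • (star u * u) → u = 0 := by
      intro u hu
      have h1 : (0 : ℂ) - (lam : ℂ) • (star u * u)
          = ((-(lam * Complex.normSq u) : ℝ) : ℂ) := by
        rw [Complex.star_def, ← Complex.normSq_eq_conj_mul_self]
        simp [Complex.ext_iff]
      rw [h1] at hu
      have h2 := (Complex.le_def.mp hu).1
      simp only [Complex.zero_re, Complex.ofReal_re] at h2
      have hns : Complex.normSq u = 0 := by nlinarith [Complex.normSq_nonneg u]
      exact Complex.normSq_eq_zero.mp hns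
    have hq := Matrix.PosSemidef.dotProduct_mulVec_nonneg ⟨hherm, hposd⟩ z'
    rw [Matrix.sub_mulVec, dotProduct_sub, Matrix.smul_mulVec,
      dotProduct_smul, hTz, dotProduct_zero, dot_rankone] at hq
    have hc0 := haux _ hq
    have hinner : (inner ℂ ψ z : ℂ) = 0 := by
      rw [EuclideanSpace.inner_eq_star_dotProduct, dotProduct_comm]; exact hc0
    have hyzin : (inner ℂ y z : ℂ) = 0 := K.inner_right_of_mem_orthogonal hy hz
    have hzz : (inner ℂ z z : ℂ) = 0 := by
      have h3 : (inner ℂ ψ z : ℂ) = inner ℂ y z + inner ℂ z z := by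
        rw [hyz, inner_add_left]
      rw [hinner, hyzin, zero_add] at h3
      exact h3.symm
    have hz0 : z = 0 := inner_self_eq_zero.mp hzz
    have hψy : ψ = y := by rw [hyz, hz0, add_zero]
    obtain ⟨x, hx⟩ := hy
    refine ⟨WithLp.equiv 2 (Fin d → ℂ) x, ?_⟩
    have h3 : Matrix.toEuclideanLin T x = ψ := by rw [hx, hψy]
    exact congrArg WithLp.ofLp h3
  · rintro ⟨x, hx⟩
    have hR : (CFC.sqrt T).PosSemidef := (CFC.sqrt_nonneg T).posSemidef
    set R := CFC.sqrt T with hRdef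
    set y : Fin d → ℂ := R.mulVec x with hy
    have hRy : R.mulVec y = ψ := by
      rw [hy, Matrix.mulVec_mulVec, CFC.sqrt_mul_sqrt_self T hT.nonneg]
      exact hx
    have hy0 : y ≠ 0 := by
      intro h
      apply hψ0
      have h4 : R.mulVec y = 0 := by rw [h, Matrix.mulVec_zero]
      simpa using congrArg (WithLp.toLp 2) (hRy.symm.trans h4)
    have hdp : 0 < star y ⬝ᵥ y := dotProduct_star_self_pos_iff.mpr hy0
    set nr : ℝ := ∑ i, Complex.normSq (y i) with hnr
    have hnrpos : 0 < nr := by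
      have h5 := (Complex.lt_def.mp hdp).1
      rw [dot_star_self] at h5
      simpa using h5
    refine ⟨1 / nr, by positivity, Matrix.PosSemidef.of_dotProduct_mulVec_nonneg ?_ ?_⟩
    · have hPh : (Matrix.of fun j k => ψ j * star (ψ k)).IsHermitian := by
        ext j k
        simp [Matrix.conjTranspose_apply, mul_comm]
      have hsm : (((1 / nr : ℝ) : ℂ) • (Matrix.of fun j k => ψ j * star (ψ k))
          : Matrix (Fin d) (Fin d) ℂ).IsHermitian := by
        unfold Matrix.IsHermitian
        rw [Matrix.conjTranspose_smul, hPh.eq]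
        congr 1
        simp [Complex.star_def, Complex.conj_ofReal]
      exact hT.1.sub hsm
    · intro v
      have hTeq : star v ⬝ᵥ T *ᵥ v = star (R.mulVec v) ⬝ᵥ (R.mulVec v) := by
        conv_lhs => rw [← CFC.sqrt_mul_sqrt_self T hT.nonneg, ← hRdef, ← Matrix.mulVec_mulVec,
          herm_dot_shift hR.1]
      have key2 : ∀ u : ℂ, u = star y ⬝ᵥ (R.mulVec v) →
          (0 : ℂ) ≤ star (R.mulVec v) ⬝ᵥ (R.mulVec v) - ((1 / nr : ℝ) : ℂ) • (star u * u) := by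
        intro u hu
        have hcs : Complex.normSq u ≤ nr * ∑ i, Complex.normSq (R.mulVec v i) := by
          rw [hu]
          exact cs_normSq y (R.mulVec v)
        have h6 : star (R.mulVec v) ⬝ᵥ (R.mulVec v) - ((1 / nr : ℝ) : ℂ) • (star u * u)
            = (((∑ i, Complex.normSq (R.mulVec v i)) - (1 / nr) * Complex.normSq u : ℝ) : ℂ) := by
          rw [dot_star_self, Complex.star_def, ← Complex.normSq_eq_conj_mul_self]
          simp [Complex.ext_iff]
        rw [h6, Complex.le_def]
        constructor
        · simp only [Complex.zero_re, Complex.ofReal_re]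
          rw [sub_nonneg, div_mul_eq_mul_div, one_mul, div_le_iff₀ hnrpos]
          linarith [hcs]
        · simp
      rw [Matrix.sub_mulVec, dotProduct_sub, Matrix.smul_mulVec,
        dotProduct_smul, hTeq, dot_rankone]
      refine key2 _ ?_
      rw [← hRy, Matrix.star_mulVec, ← Matrix.dotProduct_mulVec, hR.1.eq]
end

section
/- Let d be a positive natural number, let P ∈ Matrix (Fin d) (Fin d) ℂ be an orthogonal projection (P = P* = P²), and let (K_j)_{j ∈ J} be a finite family of matrices with ∑_j K_j* K_j = P. Suppose the associated operation is ideal on its outcome: for every density matrix T with trace(T · P) = 1 one has ∑_j K_j T K_j* = T. Then the operation is the Lüders operation: ∑_j K_j T K_j* = P T P for every matrix T ∈ Matrix (Fin d) (Fin d) ℂ. -/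
open scoped ComplexOrder Matrix

open Matrix in
/-- The measurement operation as a linear map. -/
noncomputable def luedersAuxPhi {d : ℕ} {J : Type} [Fintype J]
    (K : J → Matrix (Fin d) (Fin d) ℂ) :
    Matrix (Fin d) (Fin d) ℂ →ₗ[ℂ] Matrix (Fin d) (Fin d) ℂ where
  toFun T := ∑ j, K j * T * (K j)ᴴ
  map_add' T S := by simp [mul_add, add_mul, Finset.sum_add_distrib]
  map_smul' c T := by simp [Matrix.mul_smul, Matrix.smul_mul, Finset.smul_sum]

lemma luedersAuxPhi_apply {d : ℕ} {J : Type} [Fintype J]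
    (K : J → Matrix (Fin d) (Fin d) ℂ) (T : Matrix (Fin d) (Fin d) ℂ) :
    luedersAuxPhi K T = ∑ j, K j * T * (K j)ᴴ := rfl

lemma luedersAux_smul_posSemidef {d : ℕ} {M : Matrix (Fin d) (Fin d) ℂ}
    (hM : M.PosSemidef) {c : ℝ} (hc : 0 ≤ c) : ((c : ℂ) • M).PosSemidef := by
  constructor
  · show ((c : ℂ) • M)ᴴ = (c : ℂ) • M
    rw [Matrix.conjTranspose_smul, hM.1]
    congr 1
    simp [Complex.star_def, Complex.conj_ofReal]
  · 
    exact (hM.smul (by exact_mod_cast hc : (0:ℂ) ≤ (c:ℂ))).2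

/-- Any ideal measurement operation for a sharp outcome (projection `P`) is the
Lüders operation `T ↦ P T P`. -/
theorem ideal_implies_lueders
    (d : ℕ) (hd : 0 < d) (P : Matrix (Fin d) (Fin d) ℂ)
    (hP : Pᴴ = P) (hP2 : P * P = P)
    (J : Type) [Fintype J] (K : J → Matrix (Fin d) (Fin d) ℂ)
    (hK : ∑ j, (K j)ᴴ * K j = P)
    (hideal : ∀ T : Matrix (Fin d) (Fin d) ℂ, T.PosSemidef → T.trace = 1 →
      (T * P).trace = 1 → ∑ j, K j * T * (K j)ᴴ = T) :
    ∀ T : Matrix (Fin d) (Fin d) ℂ, ∑ j, K j * T * (K j)ᴴ = P * T * P := by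
  -- `K j * P = K j` for all `j`.
  have h0 : (1 - P) * (∑ j, (K j)ᴴ * K j) * (1 - P) = 0 := by
    rw [hK, sub_mul, one_mul, hP2, sub_self, zero_mul]
  have hsum0 : ∑ j, (K j * (1 - P))ᴴ * (K j * (1 - P)) = 0 := by
    rw [← h0, Finset.mul_sum, Finset.sum_mul]
    exact Finset.sum_congr rfl fun j _ => by
      rw [Matrix.conjTranspose_mul, Matrix.conjTranspose_sub,
        Matrix.conjTranspose_one, hP]
      noncomm_ring
  have hQ : ∀ j k i, (K j * (1 - P)) k i = 0 := by
    intro j₀ k i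
    have hdiag := congrArg (fun M : Matrix (Fin d) (Fin d) ℂ => M i i) hsum0
    simp only [Matrix.sum_apply, Matrix.zero_apply, Matrix.mul_apply,
      Matrix.conjTranspose_apply] at hdiag
    have hre : ∑ j : J, ∑ k, Complex.normSq ((K j * (1 - P)) k i) = 0 := by
      have : ((∑ j : J, ∑ k, Complex.normSq ((K j * (1 - P)) k i) : ℝ) : ℂ) = 0 := by
        push_cast
        rw [← hdiag]
        exact Finset.sum_congr rfl fun j _ => Finset.sum_congr rfl fun k _ =>
          Complex.normSq_eq_conj_mul_self
      exact_mod_cast this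
    have h1 := (Finset.sum_eq_zero_iff_of_nonneg
      (fun j _ => Finset.sum_nonneg fun k _ => Complex.normSq_nonneg _)).mp hre j₀
      (Finset.mem_univ _)
    have h2 := (Finset.sum_eq_zero_iff_of_nonneg
      (fun k _ => Complex.normSq_nonneg _)).mp h1 k (Finset.mem_univ _)
    exact Complex.normSq_eq_zero.mp h2
  have hKP : ∀ j, K j * P = K j := by
    intro j
    have : K j * (1 - P) = 0 := by ext k i; exact hQ j k i
    rw [mul_sub, mul_one, sub_eq_zero] at this
    exact this.symm
  have hPK : ∀ j, P * (K j)ᴴ = (K j)ᴴ := by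
    intro j
    have := congrArg Matrix.conjTranspose (hKP j)
    rwa [Matrix.conjTranspose_mul, hP] at this
  set Φ := luedersAuxPhi K with hΦdef
  -- Key: Φ fixes rank-one operators supported in the range of P.
  have key : ∀ v : Fin d → ℂ, P *ᵥ v = v →
      Φ (Matrix.vecMulVec v (star v)) = Matrix.vecMulVec v (star v) := by
    intro v hv
    by_cases hv0 : v = 0
    · have hz : Matrix.vecMulVec v (star v) = 0 := by
        subst hv0; ext i j; simp [Matrix.vecMulVec_apply]
      rw [hz, map_zero]
    · set M := Matrix.vecMulVec v (star v) with hMdef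
      have hMpsd : M.PosSemidef := by
        have : M = (Matrix.replicateRow Unit (star v))ᴴ * Matrix.replicateRow Unit (star v) := by
          rw [Matrix.conjTranspose_replicateRow, star_star, hMdef, Matrix.vecMulVec_eq Unit]
        rw [this]
        exact Matrix.posSemidef_conjTranspose_mul_self _
      set c : ℝ := ∑ i, Complex.normSq (v i) with hcdef
      have hc : 0 < c := by
        obtain ⟨i, hi⟩ := Function.ne_iff.mp hv0
        exact Finset.sum_pos' (fun _ _ => Complex.normSq_nonneg _)
          ⟨i, Finset.mem_univ _, Complex.normSq_pos.mpr hi⟩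
      have htr : M.trace = (c : ℂ) := by
        have hdg : ∀ i, M.diag i = (Complex.normSq (v i) : ℂ) := fun i => by
          simp [hMdef, Matrix.vecMulVec_apply, Matrix.diag, Complex.mul_conj]
        rw [Matrix.trace, hcdef]
        push_cast
        exact Finset.sum_congr rfl fun i _ => hdg i
      have hv' : Matrix.vecMul (star v) P = star v := by
        have := congrArg star hv
        rwa [Matrix.star_mulVec, hP] at this
      have hMP : M * P = M := by
        ext i j
        have : (M * P) i j = v i * Matrix.vecMul (star v) P j := by
          simp [hMdef, Matrix.mul_apply, Matrix.vecMul, dotProduct,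
            Matrix.vecMulVec_apply, Finset.mul_sum, mul_assoc]
        rw [this, hv']
        simp [hMdef, Matrix.vecMulVec_apply]
      set T : Matrix (Fin d) (Fin d) ℂ := ((c⁻¹ : ℝ) : ℂ) • M with hTdef
      have hc0 : ((c : ℝ) : ℂ) ≠ 0 := by exact_mod_cast hc.ne'
      have hTpsd : T.PosSemidef := luedersAux_smul_posSemidef hMpsd (inv_nonneg.mpr hc.le)
      have hTtr : T.trace = 1 := by
        rw [hTdef, Matrix.trace_smul, htr, smul_eq_mul]
        push_cast
        field_simp
      have hTP : (T * P).trace = 1 := by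
        rw [hTdef, Matrix.smul_mul, hMP, ← hTdef, hTtr]
      have hid := hideal T hTpsd hTtr hTP
      have hΦT : Φ T = T := hid
      rw [hTdef, map_smul] at hΦT
      have := smul_right_injective (Matrix (Fin d) (Fin d) ℂ)
        (by exact_mod_cast (inv_ne_zero hc.ne') : ((c⁻¹ : ℝ) : ℂ) ≠ 0) hΦT
      exact this
  -- Polarization: Φ fixes all `v wᴴ` with `v, w` in the range of P.
  have key2 : ∀ v w : Fin d → ℂ, P *ᵥ v = v → P *ᵥ w = w →
      Φ (Matrix.vecMulVec v (star w)) = Matrix.vecMulVec v (star w) := by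
    intro v w hv hw
    have h1 := key (v + w) (by rw [Matrix.mulVec_add, hv, hw])
    have h2 := key (v - w) (by rw [Matrix.mulVec_sub, hv, hw])
    have h3 := key (v + Complex.I • w)
      (by rw [Matrix.mulVec_add, Matrix.mulVec_smul, hv, hw])
    have h4 := key (v - Complex.I • w)
      (by rw [Matrix.mulVec_sub, Matrix.mulVec_smul, hv, hw])
    have hexp : Matrix.vecMulVec v (star w)
        = ((4:ℂ)⁻¹) • (Matrix.vecMulVec (v + w) (star (v + w))
            - Matrix.vecMulVec (v - w) (star (v - w)))
          + (Complex.I * (4:ℂ)⁻¹) •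
            (Matrix.vecMulVec (v + Complex.I • w) (star (v + Complex.I • w))
              - Matrix.vecMulVec (v - Complex.I • w) (star (v - Complex.I • w))) := by
      ext i j
      simp only [Matrix.vecMulVec_apply, Matrix.add_apply, Matrix.sub_apply,
        Matrix.smul_apply, Pi.add_apply, Pi.sub_apply, Pi.smul_apply, Pi.star_apply,
        smul_eq_mul, star_add, star_sub, star_mul', Complex.star_def, map_add,
        map_sub, map_mul, Complex.conj_I]
      linear_combination (v i * (starRingEnd ℂ) (w j)
        - w i * (starRingEnd ℂ) (v j)) / 2 * Complex.I_mul_I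
    rw [hexp]
    simp only [map_add, map_smul, map_sub, h1, h2, h3, h4]
  -- Decompose `P * T * P` into rank-one pieces.
  intro T
  have hPe : ∀ x y, (starRingEnd ℂ) (P x y) = P y x := by
    intro x y
    have := congrFun (congrFun hP y) x
    simpa [Matrix.conjTranspose_apply, Complex.star_def] using this
  have hT : P * T * P = ∑ a, ∑ b, T a b •
      Matrix.vecMulVec (P *ᵥ Pi.single a 1) (star (P *ᵥ Pi.single b 1)) := by
    conv_lhs => rw [Matrix.matrix_eq_sum_single T]
    rw [Finset.mul_sum, Finset.sum_mul]
    refine Finset.sum_congr rfl fun a _ => ?_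
    rw [Finset.mul_sum, Finset.sum_mul]
    refine Finset.sum_congr rfl fun b _ => ?_
    ext i j
    simp only [Matrix.mul_apply, Matrix.single, Matrix.smul_apply,
      Matrix.vecMulVec_apply, Matrix.mulVec, dotProduct, Pi.single_apply,
      Pi.star_apply, Matrix.of_apply, smul_eq_mul, ite_and, mul_ite, mul_zero,
      ite_mul, zero_mul, Finset.sum_ite_eq, Finset.sum_ite_eq',
      Finset.mem_univ, if_true, mul_one]
    rw [Complex.star_def, hPe]
    ring
  have hterm : ∀ j (S : Matrix (Fin d) (Fin d) ℂ),
      K j * (P * S * P) * (K j)ᴴ = K j * S * (K j)ᴴ := by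
    intro j S
    calc K j * (P * S * P) * (K j)ᴴ = (K j * P) * S * (P * (K j)ᴴ) := by
          simp only [mul_assoc]
      _ = K j * S * (K j)ᴴ := by rw [hKP, hPK]
  have hstep : ∑ j, K j * T * (K j)ᴴ = Φ (P * T * P) := by
    rw [hΦdef, luedersAuxPhi_apply]
    exact Finset.sum_congr rfl fun j _ => (hterm j T).symm
  rw [hstep, hT, map_sum]
  refine Finset.sum_congr rfl fun a _ => ?_
  rw [map_sum]
  refine Finset.sum_congr rfl fun b _ => ?_
  rw [map_smul, key2 _ _ (by rw [Matrix.mulVec_mulVec, hP2]) (by rw [Matrix.mulVec_mulVec, hP2])]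
end

section
/- Let d be a positive natural number, let (P_k)_{k ∈ K} be a finite family of pairwise orthogonal projections in Matrix (Fin d) (Fin d) ℂ (P_k = P_k* = P_k², and P_k P_l = 0 for k ≠ l) with ∑_k P_k = 1, and let B ∈ Matrix (Fin d) (Fin d) ℂ be Hermitian. Then the following are equivalent: (a) ∑_k P_k B P_k = B; (b) P_k B = B P_k for all k ∈ K. -/
open scoped ComplexOrder Matrix

/-- Lüders theorem: the nonselective Lüders measurement of a discrete sharp
observable leaves a Hermitian `B` undisturbed iff `B` commutes with every
spectral projection. -/
theorem lueders_theorem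
    (d : ℕ) (hd : 0 < d) (K : Type) [Fintype K]
    (P : K → Matrix (Fin d) (Fin d) ℂ)
    (hP : ∀ k, (P k)ᴴ = P k) (hP2 : ∀ k, P k * P k = P k)
    (horth : ∀ k l, k ≠ l → P k * P l = 0)
    (hsum : ∑ k, P k = 1)
    (B : Matrix (Fin d) (Fin d) ℂ) (hB : Bᴴ = B) :
    (∑ k, P k * B * P k = B) ↔ (∀ k, P k * B = B * P k) := by
  constructor
  · intro ha j
    have hL : P j * B = P j * B * P j := by
      calc P j * B = P j * ∑ k, P k * B * P k := by rw [ha]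
        _ = ∑ k, P j * P k * B * P k := by
              rw [Finset.mul_sum]; congr 1; ext k; noncomm_ring
        _ = P j * B * P j := by
              rw [Finset.sum_eq_single j]
              · rw [hP2]
              · intro k _ hk
                rw [horth j k (Ne.symm hk), zero_mul, zero_mul]
              · intro h; exact absurd (Finset.mem_univ j) h
    have hR : B * P j = P j * B * P j := by
      calc B * P j = (∑ k, P k * B * P k) * P j := by rw [ha]
        _ = ∑ k, P k * B * (P k * P j) := by
              rw [Finset.sum_mul]; congr 1; ext k; noncomm_ring
        _ = P j * B * P j := by
              rw [Finset.sum_eq_single j]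
              · rw [hP2]
              · intro k _ hk
                rw [horth k j hk, mul_zero]
              · intro h; exact absurd (Finset.mem_univ j) h
    rw [hL, hR]
  · intro hb
    calc ∑ k, P k * B * P k = ∑ k, B * (P k * P k) := by
          congr 1; ext k; rw [← mul_assoc, ← hb k, mul_assoc]
      _ = B * ∑ k, P k := by
          rw [Finset.mul_sum]; congr 1; ext k; rw [hP2]
      _ = B := by rw [hsum, mul_one]
end

section
/- Let d be a positive natural number and let E, B ∈ Matrix (Fin d) (Fin d) ℂ be effects, i.e., both E and 1 − E, and both B and 1 − B, are positive semidefinite. Let E^{1/2} and (1−E)^{1/2} denote the positive semidefinite square roots. Then E^{1/2} B E^{1/2} + (1−E)^{1/2} B (1−E)^{1/2} = B if and only if E B = B E. -/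
open scoped ComplexOrder Matrix

/-- The positive semidefinite square root of a positive semidefinite matrix
(the definition `Matrix.PosSemidef.sqrt` of the older Mathlib, removed since). -/
noncomputable def Matrix.PosSemidef.sqrt {n 𝕜 : Type*} [Fintype n] [DecidableEq n] [RCLike 𝕜]
    {A : Matrix n n 𝕜} (hA : A.PosSemidef) : Matrix n n 𝕜 :=
  hA.1.eigenvectorUnitary.1 * Matrix.diagonal ((↑) ∘ (Real.sqrt ·) ∘ hA.1.eigenvalues) *
  (star hA.1.eigenvectorUnitary : Matrix n n 𝕜)

lemma Matrix.PosSemidef.sqrt_mul_self {d : ℕ} {A : Matrix (Fin d) (Fin d) ℂ} (hA : A.PosSemidef) :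
    hA.sqrt * hA.sqrt = A := by
  have hU2 : star (hA.1.eigenvectorUnitary : Matrix (Fin d) (Fin d) ℂ) * hA.1.eigenvectorUnitary = 1 :=
    Matrix.mem_unitaryGroup_iff'.mp hA.1.eigenvectorUnitary.2
  conv_rhs => rw [hA.1.spectral_theorem, Unitary.conjStarAlgAut_apply]
  unfold Matrix.PosSemidef.sqrt
  have hD : Matrix.diagonal ((↑) ∘ (Real.sqrt ·) ∘ hA.1.eigenvalues) *
      Matrix.diagonal ((↑) ∘ (Real.sqrt ·) ∘ hA.1.eigenvalues)
      = Matrix.diagonal (RCLike.ofReal ∘ hA.1.eigenvalues : Fin d → ℂ) := by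
    rw [Matrix.diagonal_mul_diagonal]
    congr 1; funext i
    simp only [Function.comp_apply]
    rw [← Complex.ofReal_mul, Real.mul_self_sqrt (hA.eigenvalues_nonneg i)]
    rfl
  rw [← hD]
  simp only [mul_assoc]
  rw [← mul_assoc (star _) _ (_ * _), hU2, one_mul]
  rfl

lemma Matrix.PosSemidef.posSemidef_sqrt {d : ℕ} {A : Matrix (Fin d) (Fin d) ℂ} (hA : A.PosSemidef) :
    hA.sqrt.PosSemidef := by
  unfold Matrix.PosSemidef.sqrt
  have h := (Matrix.posSemidef_diagonal_iff.mpr (fun i =>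
    (by simp [Function.comp_apply, Real.sqrt_nonneg] :
      (0 : ℂ) ≤ ((↑) ∘ (Real.sqrt ·) ∘ hA.1.eigenvalues) i))).mul_mul_conjTranspose_same
    (hA.1.eigenvectorUnitary : Matrix (Fin d) (Fin d) ℂ)
  simpa [Matrix.star_eq_conjTranspose] using h

/-- If `X` commutes with a positive semidefinite matrix `A`, it commutes with its square root. -/
lemma sqrt_commute_aux {d : ℕ} {A : Matrix (Fin d) (Fin d) ℂ} (hA : A.PosSemidef)
    (X : Matrix (Fin d) (Fin d) ℂ) (h : A * X = X * A) : hA.sqrt * X = X * hA.sqrt := by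
  set U : Matrix (Fin d) (Fin d) ℂ := (hA.1.eigenvectorUnitary : Matrix (Fin d) (Fin d) ℂ) with hU
  have hU1 : U * star U = 1 := Matrix.mem_unitaryGroup_iff.mp hA.1.eigenvectorUnitary.2
  have hU2 : star U * U = 1 := Matrix.mem_unitaryGroup_iff'.mp hA.1.eigenvectorUnitary.2
  have hU1' : ∀ M : Matrix (Fin d) (Fin d) ℂ, U * (star U * M) = M := fun M => by
    rw [← mul_assoc, hU1, one_mul]
  have hU2' : ∀ M : Matrix (Fin d) (Fin d) ℂ, star U * (U * M) = M := fun M => by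
    rw [← mul_assoc, hU2, one_mul]
  set lam := hA.1.eigenvalues with hlam
  set D : Matrix (Fin d) (Fin d) ℂ := Matrix.diagonal (RCLike.ofReal ∘ lam) with hD
  set D' : Matrix (Fin d) (Fin d) ℂ :=
    Matrix.diagonal ((↑) ∘ Real.sqrt ∘ lam) with hD'
  have hAeq : A = U * D * star U := hA.1.spectral_theorem
  have hsq : hA.sqrt = U * D' * star U := rfl
  set Y : Matrix (Fin d) (Fin d) ℂ := star U * X * U with hY
  have hYD : D * Y = Y * D := by
    have h1 : D * Y = star U * (A * X) * U := by
      simp only [hY, hAeq, mul_assoc, hU2', hU2, mul_one]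
    have h2 : Y * D = star U * (X * A) * U := by
      simp only [hY, hAeq, mul_assoc, hU2', hU2, mul_one]
    rw [h1, h2, h]
  have hYD' : D' * Y = Y * D' := by
    ext i j
    have h0 := congrFun (congrFun hYD i) j
    simp only [hD, hD', Matrix.diagonal_mul, Matrix.mul_diagonal, Function.comp_apply] at h0 ⊢
    rcases eq_or_ne (lam i) (lam j) with he | hne
    · rw [he, mul_comm]
    · have hz : Y i j = 0 := by
        have hsub : ((RCLike.ofReal (lam i) : ℂ) - RCLike.ofReal (lam j)) * Y i j = 0 := by
          rw [sub_mul, h0]; ring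
        rcases mul_eq_zero.mp hsub with hc | hc
        · exact absurd (RCLike.ofReal_inj.mp (sub_eq_zero.mp hc)) hne
        · exact hc
      simp [hz]
  have hX : U * Y * star U = X := by
    rw [hY]
    calc U * (star U * X * U) * star U = (U * star U) * X * (U * star U) := by noncomm_ring
      _ = X := by rw [hU1, one_mul, mul_one]
  rw [hsq, ← hX]
  simp only [mul_assoc, hU2']
  have : D' * (Y * star U) = Y * (D' * star U) := by
    rw [← mul_assoc, hYD', mul_assoc]
  rw [this]

/-- A matrix with `trace (Mᴴ * M) + trace (Nᴴ * N) = 0` vanishes. -/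
lemma eq_zero_of_trace_sum_zero {d : ℕ} (C D : Matrix (Fin d) (Fin d) ℂ)
    (h : (Cᴴ * C).trace + (Dᴴ * D).trace = 0) : C = 0 := by
  have ht : ∀ M : Matrix (Fin d) (Fin d) ℂ,
      (Mᴴ * M).trace = ((∑ i, ∑ j, Complex.normSq (M j i) : ℝ) : ℂ) := by
    intro M
    simp only [Matrix.trace, Matrix.diag, Matrix.mul_apply, Matrix.conjTranspose_apply]
    push_cast
    refine Finset.sum_congr rfl fun i _ => Finset.sum_congr rfl fun j _ => ?_
    simpa using (Complex.normSq_eq_conj_mul_self (z := M j i)).symm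
  rw [ht C, ht D, ← Complex.ofReal_add, Complex.ofReal_eq_zero] at h
  have hC0 : (∑ i, ∑ j, Complex.normSq (C j i) : ℝ) = 0 := by
    have h1 : (0:ℝ) ≤ ∑ i, ∑ j, Complex.normSq (C j i) :=
      Finset.sum_nonneg fun i _ => Finset.sum_nonneg fun j _ => Complex.normSq_nonneg _
    have h2 : (0:ℝ) ≤ ∑ i, ∑ j, Complex.normSq (D j i) :=
      Finset.sum_nonneg fun i _ => Finset.sum_nonneg fun j _ => Complex.normSq_nonneg _
    linarith
  ext i j
  have := (Finset.sum_eq_zero_iff_of_nonneg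
      (fun i _ => Finset.sum_nonneg fun j _ => Complex.normSq_nonneg (C j i))).mp hC0
        j (Finset.mem_univ j)
  have := (Finset.sum_eq_zero_iff_of_nonneg
      (fun k _ => Complex.normSq_nonneg (C k j))).mp this i (Finset.mem_univ i)
  simpa using Complex.normSq_eq_zero.mp this

/-- Generalized Lüders theorem for a simple (two-outcome) observable `{E, 1-E}`:
the nonselective generalized Lüders operation leaves the effect `B` undisturbed
iff `B` commutes with `E`. -/
theorem generalized_lueders_simple
    (d : ℕ) (hd : 0 < d) (E B : Matrix (Fin d) (Fin d) ℂ)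
    (hE : E.PosSemidef) (hE' : (1 - E).PosSemidef)
    (hB : B.PosSemidef) (hB' : (1 - B).PosSemidef) :
    hE.sqrt * B * hE.sqrt + hE'.sqrt * B * hE'.sqrt = B ↔ E * B = B * E := by
  set S := hE.sqrt with hSdef
  set T := hE'.sqrt with hTdef
  have hSS : S * S = E := hE.sqrt_mul_self
  have hTT : T * T = 1 - E := hE'.sqrt_mul_self
  have hST : S * S + T * T = 1 := by rw [hSS, hTT]; abel
  have hSh : Sᴴ = S := hE.posSemidef_sqrt.1
  have hTh : Tᴴ = T := hE'.posSemidef_sqrt.1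
  have hBh : Bᴴ = B := hB.1
  constructor
  · intro H
    set C := S * B - B * S with hCdef
    set Dm := T * B - B * T with hDdef
    have hCt : Cᴴ = B * S - S * B := by
      rw [hCdef, Matrix.conjTranspose_sub, Matrix.conjTranspose_mul,
        Matrix.conjTranspose_mul, hSh, hBh]
    have hDt : Dmᴴ = B * T - T * B := by
      rw [hDdef, Matrix.conjTranspose_sub, Matrix.conjTranspose_mul,
        Matrix.conjTranspose_mul, hTh, hBh]
    have key : ∀ X : Matrix (Fin d) (Fin d) ℂ,
        (B * X - X * B) * (X * B - B * X)
          = B * (X * X) * B - B * (X * B * X) - (X * B * X) * B + X * (B * B) * X := by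
      intro X; noncomm_ring
    have h1 : B * (S * S) * B + B * (T * T) * B = B * B := by
      have : B * (S * S) * B + B * (T * T) * B = B * (S * S + T * T) * B := by noncomm_ring
      rw [this, hST, mul_one]
    have h2 : B * (S * B * S) + B * (T * B * T) = B * B := by
      have : B * (S * B * S) + B * (T * B * T) = B * (S * B * S + T * B * T) := by noncomm_ring
      rw [this, H]
    have h3 : (S * B * S) * B + (T * B * T) * B = B * B := by
      have : (S * B * S) * B + (T * B * T) * B = (S * B * S + T * B * T) * B := by noncomm_ring
      rw [this, H]
    have hmat : Cᴴ * C + Dmᴴ * Dm = S * (B * B) * S + T * (B * B) * T - B * B := by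
      rw [hCt, hDt, hCdef, hDdef, key S, key T]
      calc (B * (S * S) * B - B * (S * B * S) - (S * B * S) * B + S * (B * B) * S)
            + (B * (T * T) * B - B * (T * B * T) - (T * B * T) * B + T * (B * B) * T)
          = (B * (S * S) * B + B * (T * T) * B) + (S * (B * B) * S + T * (B * B) * T)
            - (B * (S * B * S) + B * (T * B * T)) - ((S * B * S) * B + (T * B * T) * B) := by
              abel
        _ = S * (B * B) * S + T * (B * B) * T - B * B := by rw [h1, h2, h3]; abel
    have htr : (Cᴴ * C).trace + (Dmᴴ * Dm).trace = 0 := by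
      rw [← Matrix.trace_add, hmat, Matrix.trace_sub, Matrix.trace_add,
        Matrix.trace_mul_cycle S (B * B) S, Matrix.trace_mul_cycle T (B * B) T,
        ← Matrix.trace_add, ← Matrix.add_mul, hST, Matrix.one_mul, sub_self]
    have hC0 : C = 0 := eq_zero_of_trace_sum_zero C Dm htr
    have hSB : S * B = B * S := by
      have := sub_eq_zero.mp hC0
      exact this
    calc E * B = S * (S * B) := by rw [← hSS, mul_assoc]
      _ = S * (B * S) := by rw [hSB]
      _ = (S * B) * S := by rw [mul_assoc]
      _ = (B * S) * S := by rw [hSB]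
      _ = B * E := by rw [mul_assoc, hSS]
  · intro hcomm
    have hSB : S * B = B * S := sqrt_commute_aux hE B hcomm
    have hTB : T * B = B * T := by
      apply sqrt_commute_aux hE' B
      rw [Matrix.sub_mul, Matrix.mul_sub, one_mul, mul_one, hcomm]
    rw [show hE.sqrt * B * hE.sqrt + hE'.sqrt * B * hE'.sqrt = S * B * S + T * B * T from rfl,
      hSB, hTB, mul_assoc, mul_assoc, ← Matrix.mul_add, hST, mul_one]
end

section
/- Let d, m be positive natural numbers, H = EuclideanSpace ℂ (Fin d), H_A = EuclideanSpace ℂ (Fin m), and identify H ⊗ H_A with EuclideanSpace ℂ (Fin d × Fin m) via (ψ ⊗ φ)(i,j) = ψ(i) · φ(j); for operators A on H and B on H_A, A ⊗ 1 and 1 ⊗ B denote the corresponding operators acting on the first and second factor. Let (P_k)_{k ∈ K} be a finite family of pairwise orthogonal projections on H with ∑_k P_k = 1, let (Z_k)_{k ∈ K} be pairwise orthogonal projections on H_A with ∑_k Z_k = 1, let φ ∈ H_A be a unit vector, let U be a unitary operator on H ⊗ H_A, and let L, L_A be Hermitian operators on H and H_A respectively. Assume: (i) conservation: U ∘ (L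 ⊗ 1 + 1 ⊗ L_A) = (L ⊗ 1 + 1 ⊗ L_A) ∘ U; (ii) probability reproducibility: ⟨U(ψ ⊗ φ), (1 ⊗ Z_k) U(ψ ⊗ φ)⟩ = ⟨ψ, P_k ψ⟩ for all ψ ∈ H and all k; (iii) repeatability: ⟨U(ψ ⊗ φ), (P_k ⊗ Z_k) U(ψ ⊗ φ)⟩ = ⟨U(ψ ⊗ φ), (1 ⊗ Z_k) U(ψ ⊗ φ)⟩ for all ψ ∈ H and all k. Then L commutes with every P_k: L P_k = P_k L for all k ∈ K. -/
open scoped ComplexOrder Matrix Kronecker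

section WAYAux

open Matrix

variable {d m : ℕ}

private lemma way_tens_dot (x x' : Fin d → ℂ) (y y' : Fin m → ℂ) :
    star (fun p : Fin d × Fin m => x p.1 * y p.2) ⬝ᵥ
      (fun p : Fin d × Fin m => x' p.1 * y' p.2) =
    (star x ⬝ᵥ x') * (star y ⬝ᵥ y') := by
  simp only [dotProduct, Fintype.sum_prod_type, Finset.sum_mul_sum, Pi.star_apply]
  refine Finset.sum_congr rfl fun i _ => Finset.sum_congr rfl fun j _ => ?_
  simp only [star_mul']
  ring

private lemma way_kron_mulVec (A : Matrix (Fin d) (Fin d) ℂ) (B : Matrix (Fin m) (Fin m) ℂ)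
    (x : Fin d → ℂ) (y : Fin m → ℂ) :
    (A ⊗ₖ B).mulVec (fun p => x p.1 * y p.2) =
      fun p => (A.mulVec x) p.1 * (B.mulVec y) p.2 := by
  funext p
  simp only [mulVec, dotProduct, Fintype.sum_prod_type, Finset.sum_mul_sum,
    kroneckerMap_apply]
  refine Finset.sum_congr rfl fun i _ => Finset.sum_congr rfl fun j _ => ?_
  ring

private lemma way_kron_conjTranspose (A : Matrix (Fin d) (Fin d) ℂ)
    (B : Matrix (Fin m) (Fin m) ℂ) : (A ⊗ₖ B)ᴴ = Aᴴ ⊗ₖ Bᴴ := by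
  ext p q
  simp only [conjTranspose_apply, kroneckerMap_apply, star_mul']
  try ring

/-- `⟨B u, C v⟩ = ⟨u, Bᴴ C v⟩`. -/
private lemma way_dot_mul {n : Type*} [Fintype n] (B C : Matrix n n ℂ) (u v : n → ℂ) :
    star (B.mulVec u) ⬝ᵥ (C.mulVec v) = star u ⬝ᵥ (Bᴴ * C).mulVec v := by
  rw [star_mulVec, dotProduct_mulVec, Matrix.vecMul_vecMul, ← dotProduct_mulVec]

/-- `⟨B u, A C v⟩ = ⟨u, (Bᴴ A C) v⟩`. -/
private lemma way_dot_sandwich {n : Type*} [Fintype n] (A B C : Matrix n n ℂ)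
    (u v : n → ℂ) :
    star (B.mulVec u) ⬝ᵥ A.mulVec (C.mulVec v) =
      star u ⬝ᵥ (Bᴴ * A * C).mulVec v := by
  rw [mulVec_mulVec, way_dot_mul, ← mul_assoc]

private lemma way_proj_fixed {n : Type*} [Fintype n] (Q : Matrix n n ℂ)
    (hQh : Qᴴ = Q) (hQp : Q * Q = Q) (v : n → ℂ)
    (h : star v ⬝ᵥ Q.mulVec v = star v ⬝ᵥ v) : Q.mulVec v = v := by
  have h1 : star (Q.mulVec v) ⬝ᵥ v = star v ⬝ᵥ Q.mulVec v := by
    rw [star_mulVec, hQh, ← dotProduct_mulVec]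
  have h2 : star (Q.mulVec v) ⬝ᵥ Q.mulVec v = star v ⬝ᵥ Q.mulVec v := by
    rw [way_dot_mul, hQh, hQp]
  have key : star (v - Q.mulVec v) ⬝ᵥ (v - Q.mulVec v) = 0 := by
    simp only [star_sub, sub_dotProduct, dotProduct_sub, h1, h2, h]
    ring
  have hz := (dotProduct_star_self_eq_zero).mp key
  exact (sub_eq_zero.mp hz).symm

private lemma way_mat_eq_zero {n : Type*} [Fintype n] [DecidableEq n]
    (A : Matrix n n ℂ) (h : ∀ v w : n → ℂ, star w ⬝ᵥ A.mulVec v = 0) : A = 0 := by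
  ext i j
  have h' := h (Pi.single j 1) (Pi.single i 1)
  rw [mulVec_single] at h'
  simp only [dotProduct, Pi.star_apply, Pi.single_apply, mul_one] at h'
  rw [Finset.sum_eq_single i (fun b _ hb => by simp [hb]) (by simp)] at h'
  simpa using h'

end WAYAux

/-- Wigner–Araki–Yanase theorem (finite-dimensional version): if a measurement
scheme for a discrete sharp observable `(P_k)` satisfies probability
reproducibility and repeatability, and the coupling `U` conserves the additive
quantity `L ⊗ 1 + 1 ⊗ L_A`, then `L` commutes with every `P_k`. -/
theorem wigner_araki_yanase
    (d m : ℕ) (hd : 0 < d) (hm : 0 < m) (K : Type) [Fintype K]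
    (P : K → Matrix (Fin d) (Fin d) ℂ)
    (hPh : ∀ k, (P k)ᴴ = P k) (hPp : ∀ k, P k * P k = P k)
    (hPorth : ∀ k l, k ≠ l → P k * P l = 0)
    (hPsum : ∑ k, P k = 1)
    (Z : K → Matrix (Fin m) (Fin m) ℂ)
    (hZh : ∀ k, (Z k)ᴴ = Z k) (hZp : ∀ k, Z k * Z k = Z k)
    (hZorth : ∀ k l, k ≠ l → Z k * Z l = 0)
    (hZsum : ∑ k, Z k = 1)
    (φ : EuclideanSpace ℂ (Fin m)) (hφ : ‖φ‖ = 1)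
    (U : Matrix (Fin d × Fin m) (Fin d × Fin m) ℂ)
    (hU : U ∈ Matrix.unitaryGroup (Fin d × Fin m) ℂ)
    (L : Matrix (Fin d) (Fin d) ℂ) (hL : Lᴴ = L)
    (LA : Matrix (Fin m) (Fin m) ℂ) (hLA : LAᴴ = LA)
    (hcons : U * (L ⊗ₖ (1 : Matrix (Fin m) (Fin m) ℂ) +
                  (1 : Matrix (Fin d) (Fin d) ℂ) ⊗ₖ LA) =
             (L ⊗ₖ (1 : Matrix (Fin m) (Fin m) ℂ) +
              (1 : Matrix (Fin d) (Fin d) ℂ) ⊗ₖ LA) * U)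
    (hprob : ∀ (ψ : Fin d → ℂ) (k : K),
      star (U.mulVec fun p => ψ p.1 * φ p.2) ⬝ᵥ
          (((1 : Matrix (Fin d) (Fin d) ℂ) ⊗ₖ Z k).mulVec
            (U.mulVec fun p => ψ p.1 * φ p.2)) =
        star ψ ⬝ᵥ (P k).mulVec ψ)
    (hrep : ∀ (ψ : Fin d → ℂ) (k : K),
      star (U.mulVec fun p => ψ p.1 * φ p.2) ⬝ᵥ
          ((P k ⊗ₖ Z k).mulVec (U.mulVec fun p => ψ p.1 * φ p.2)) =
        star (U.mulVec fun p => ψ p.1 * φ p.2) ⬝ᵥ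
          (((1 : Matrix (Fin d) (Fin d) ℂ) ⊗ₖ Z k).mulVec
            (U.mulVec fun p => ψ p.1 * φ p.2))) :
    ∀ k, L * P k = P k * L := by
  classical
  open Matrix in
  have hφ1 : star (φ : Fin m → ℂ) ⬝ᵥ (φ : Fin m → ℂ) = 1 := by
    have h0 : (inner ℂ φ φ : ℂ) = (1 : ℂ) := by
      rw [inner_self_eq_norm_sq_to_K, hφ]; norm_num
    rw [← h0, PiLp.inner_apply]
    simp only [RCLike.inner_apply, dotProduct, Pi.star_apply]
    exact Finset.sum_congr rfl fun x _ => mul_comm _ _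
  have hUst : star U * U = 1 := hU.1
  have hUHU : Uᴴ * U = 1 := by rw [← Matrix.star_eq_conjTranspose]; exact hUst
  set M : Matrix (Fin d × Fin m) (Fin d × Fin m) ℂ :=
    L ⊗ₖ (1 : Matrix (Fin m) (Fin m) ℂ) + (1 : Matrix (Fin d) (Fin d) ℂ) ⊗ₖ LA with hM
  have hsand : Uᴴ * M * U = M := by
    rw [mul_assoc, ← hcons, ← mul_assoc, hUHU, one_mul]
  -- Step A
  have stepA : ∀ (k : K) (v : Fin d → ℂ),
      (P k ⊗ₖ Z k).mulVec (U.mulVec fun p => (P k).mulVec v p.1 * φ p.2) =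
        U.mulVec fun p => (P k).mulVec v p.1 * φ p.2 := by
    intro k v
    have hPψ : (P k).mulVec ((P k).mulVec v) = (P k).mulVec v := by
      rw [mulVec_mulVec, hPp]
    have hUnorm : star (U.mulVec fun p => (P k).mulVec v p.1 * φ p.2) ⬝ᵥ
        (U.mulVec fun p => (P k).mulVec v p.1 * φ p.2) =
        star ((P k).mulVec v) ⬝ᵥ (P k).mulVec v := by
      rw [way_dot_mul, hUHU, one_mulVec, way_tens_dot, hφ1, mul_one]
    have h2 : star (U.mulVec fun p => (P k).mulVec v p.1 * φ p.2) ⬝ᵥ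
        ((P k ⊗ₖ Z k).mulVec (U.mulVec fun p => (P k).mulVec v p.1 * φ p.2)) =
        star (U.mulVec fun p => (P k).mulVec v p.1 * φ p.2) ⬝ᵥ
          (U.mulVec fun p => (P k).mulVec v p.1 * φ p.2) := by
      rw [hrep ((P k).mulVec v) k, hprob ((P k).mulVec v) k, hPψ, hUnorm]
    refine way_proj_fixed _ ?_ ?_ _ h2
    · rw [way_kron_conjTranspose, hPh, hZh]
    · rw [← Matrix.mul_kronecker_mul, hPp, hZp]
  -- Step B
  have stepB : ∀ k l : K, l ≠ k → P l * L * P k = 0 := by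
    intro k l hlk
    apply way_mat_eq_zero
    intro v w
    have hQMQ : (P l ⊗ₖ Z l)ᴴ * M * (P k ⊗ₖ Z k) = 0 := by
      rw [way_kron_conjTranspose, hPh, hZh, hM, mul_add, add_mul,
        ← Matrix.mul_kronecker_mul, ← Matrix.mul_kronecker_mul,
        ← Matrix.mul_kronecker_mul, ← Matrix.mul_kronecker_mul,
        mul_one, hZorth l k hlk]
      have : P l * 1 * P k = 0 := by rw [mul_one, hPorth l k hlk]
      rw [this]
      simp
    have horth : star ((P l).mulVec w) ⬝ᵥ ((P k).mulVec v) = 0 := by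
      rw [way_dot_mul, hPh, hPorth l k hlk, zero_mulVec, dotProduct_zero]
    have hexp : star (fun p : Fin d × Fin m => (P l).mulVec w p.1 * φ p.2) ⬝ᵥ
        M.mulVec (fun p => (P k).mulVec v p.1 * φ p.2) =
        star ((P l).mulVec w) ⬝ᵥ L.mulVec ((P k).mulVec v) := by
      rw [hM, add_mulVec, dotProduct_add, way_kron_mulVec, way_kron_mulVec,
        way_tens_dot, way_tens_dot, one_mulVec, one_mulVec, hφ1, horth]
      ring
    have e1 : star (fun p : Fin d × Fin m => (P l).mulVec w p.1 * φ p.2) ⬝ᵥ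
        M.mulVec (fun p => (P k).mulVec v p.1 * φ p.2) =
        star (U.mulVec fun p : Fin d × Fin m => (P l).mulVec w p.1 * φ p.2) ⬝ᵥ
          M.mulVec (U.mulVec fun p => (P k).mulVec v p.1 * φ p.2) := by
      rw [way_dot_sandwich, hsand]
    have e2 : star (U.mulVec fun p : Fin d × Fin m => (P l).mulVec w p.1 * φ p.2) ⬝ᵥ
        M.mulVec (U.mulVec fun p => (P k).mulVec v p.1 * φ p.2) = 0 := by
      rw [← stepA k v, ← stepA l w, way_dot_sandwich, hQMQ, zero_mulVec,
        dotProduct_zero]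
    have key : star ((P l).mulVec w) ⬝ᵥ L.mulVec ((P k).mulVec v) = 0 := by
      rw [← hexp, e1, e2]
    rw [← hPh l, ← way_dot_sandwich]
    exact key
  -- Step C
  intro k
  have h1 : L * P k = P k * (L * P k) := by
    conv_lhs => rw [← one_mul (L * P k), ← hPsum, Finset.sum_mul]
    exact Finset.sum_eq_single k
      (fun l _ hl => by rw [← mul_assoc]; exact stepB k l hl)
      (fun h => absurd (Finset.mem_univ k) h)
  have h2 : P k * L = P k * L * P k := by
    conv_lhs => rw [← mul_one (P k * L), ← hPsum, Finset.mul_sum]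
    exact Finset.sum_eq_single k
      (fun l _ hl => stepB l k (Ne.symm hl))
      (fun h => absurd (Finset.mem_univ k) h)
  rw [h1, ← mul_assoc, ← h2]
end

section
/- Let d be a positive natural number and let P, Q ∈ Matrix (Fin d) (Fin d) ℂ be orthogonal projections whose ranges intersect trivially: range(P) ⊓ range(Q) = ⊥. If A ∈ Matrix (Fin d) (Fin d) ℂ is positive semidefinite with both P − A and Q − A positive semidefinite (i.e., 0 ≤ A ≤ P and 0 ≤ A ≤ Q), then A = 0. -/
open scoped ComplexOrder Matrix

open Matrix in
lemma eff_below_proj_aux {d : ℕ} (P A : Matrix (Fin d) (Fin d) ℂ)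
    (hPh : Pᴴ = P) (hP2 : P * P = P)
    (hA : A.PosSemidef) (hPA : (P - A).PosSemidef) : A = P * A := by
  have hker : ∀ y, P *ᵥ y = 0 → A *ᵥ y = 0 := by
    intro y hy
    rw [← hA.dotProduct_mulVec_zero_iff]
    have h1 := hA.dotProduct_mulVec_nonneg y
    have h2 := hPA.dotProduct_mulVec_nonneg y
    have hsum : star y ⬝ᵥ A *ᵥ y + star y ⬝ᵥ (P - A) *ᵥ y = 0 := by
      rw [← dotProduct_add, ← add_mulVec]
      have : A + (P - A) = P := by abel
      rw [this, hy, dotProduct_zero]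
    have hle : star y ⬝ᵥ A *ᵥ y ≤ 0 := by
      rw [eq_neg_of_add_eq_zero_left hsum]
      exact neg_nonpos_of_nonneg h2
    exact le_antisymm hle h1
  have hmv : ∀ x, (A - A * P) *ᵥ x = 0 := by
    intro x
    have hy : P *ᵥ (x - P *ᵥ x) = 0 := by
      rw [mulVec_sub, mulVec_mulVec, hP2, sub_self]
    have h := hker _ hy
    rw [mulVec_sub, mulVec_mulVec] at h
    rw [sub_mulVec, h]
  have h0 : A - A * P = 0 := by
    ext i j
    have := congrFun (hmv (Pi.single j 1)) i
    rwa [mulVec_single_one] at this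
  have hAP : A = A * P := by rw [← sub_eq_zero, h0]
  calc A = Aᴴ := hA.1.symm
    _ = (A * P)ᴴ := by rw [← hAP]
    _ = Pᴴ * Aᴴ := by rw [conjTranspose_mul]
    _ = P * A := by rw [hPh, hA.1]

/-- Complementary projections admit no nontrivial joint effect: if the ranges of
two orthogonal projections intersect trivially, then any positive semidefinite
`A` below both must vanish. -/
theorem no_joint_effect_of_complementary_projections
    (d : ℕ) (hd : 0 < d) (P Q A : Matrix (Fin d) (Fin d) ℂ)
    (hPh : Pᴴ = P) (hP2 : P * P = P)
    (hQh : Qᴴ = Q) (hQ2 : Q * Q = Q)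
    (hrange : LinearMap.range P.mulVecLin ⊓ LinearMap.range Q.mulVecLin = ⊥)
    (hA : A.PosSemidef) (hPA : (P - A).PosSemidef) (hQA : (Q - A).PosSemidef) :
    A = 0 := by
  have hP' := eff_below_proj_aux P A hPh hP2 hA hPA
  have hQ' := eff_below_proj_aux Q A hQh hQ2 hA hQA
  have hmv : ∀ x, A *ᵥ x = 0 := by
    intro x
    have hmem : A *ᵥ x ∈ LinearMap.range P.mulVecLin ⊓ LinearMap.range Q.mulVecLin := by
      constructor
      · exact ⟨A *ᵥ x, by rw [Matrix.mulVecLin_apply, Matrix.mulVec_mulVec, ← hP']⟩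
      · exact ⟨A *ᵥ x, by rw [Matrix.mulVecLin_apply, Matrix.mulVec_mulVec, ← hQ']⟩
    rw [hrange] at hmem
    exact hmem
  ext i j
  have := congrFun (hmv (Pi.single j 1)) i
  rwa [Matrix.mulVec_single_one] at this
end

section
/- Let d be a positive natural number and let (E_i)_{i ∈ Fin n} be a finite family of positive semidefinite matrices in Matrix (Fin d) (Fin d) ℂ with ∑_i E_i = 1 (a discrete POVM on ℂ^d). Then there exist a positive natural number m, a unit vector φ ∈ EuclideanSpace ℂ (Fin m), a unitary operator U on EuclideanSpace ℂ (Fin d × Fin m) (with (ψ ⊗ φ)(a,b) = ψ(a)·φ(b) and 1 ⊗ Z acting on the second factor), and pairwise orthogonal projections (Z_i)_{i ∈ Fin n} on EuclideanSpace ℂ (Fin m) with ∑_i Z_i = 1, such that ⟨U(ψ ⊗ φ), (1 ⊗ Z_i) U(ψ ⊗ φ)⟩ = ⟨ψ, E_i ψ⟩ for every ψ ∈ EuclideanSpace ℂ (Fin d) and every i. -/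
open scoped ComplexOrder Matrix Kronecker

/-- Fundamental theorem of quantum measurement theory, existence half (finite
dimensions, finite outcomes): every discrete POVM admits an implementation by a
measurement scheme with a pure initial apparatus state, a unitary coupling and a
sharp pointer observable, satisfying probability reproducibility. -/
theorem povm_admits_measurement_scheme
    (d n : ℕ) (hd : 0 < d) (hn : 0 < n)
    (E : Fin n → Matrix (Fin d) (Fin d) ℂ)
    (hE : ∀ i, (E i).PosSemidef) (hEsum : ∑ i, E i = 1) :
    ∃ (m : ℕ), 0 < m ∧
    ∃ (φ : EuclideanSpace ℂ (Fin m)), ‖φ‖ = 1 ∧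
    ∃ (U : Matrix (Fin d × Fin m) (Fin d × Fin m) ℂ),
      U ∈ Matrix.unitaryGroup (Fin d × Fin m) ℂ ∧
    ∃ (Z : Fin n → Matrix (Fin m) (Fin m) ℂ),
      (∀ i, (Z i)ᴴ = Z i) ∧ (∀ i, Z i * Z i = Z i) ∧
      (∀ i j, i ≠ j → Z i * Z j = 0) ∧ (∑ i, Z i = 1) ∧
      (∀ (ψ : Fin d → ℂ) (i : Fin n),
        star (U.mulVec fun p => ψ p.1 * φ p.2) ⬝ᵥ
            (((1 : Matrix (Fin d) (Fin d) ℂ) ⊗ₖ Z i).mulVec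
              (U.mulVec fun p => ψ p.1 * φ p.2)) =
          star ψ ⬝ᵥ (E i).mulVec ψ) := by
  haveI : NeZero n := ⟨hn.ne'⟩
  -- square roots of the effects
  open scoped MatrixOrder in
  set S : Fin n → Matrix (Fin d) (Fin d) ℂ := fun i => CFC.sqrt (E i) with hS
  open scoped MatrixOrder in
  have hSherm : ∀ i, (S i)ᴴ = S i := fun i => (Matrix.LE.le.posSemidef (CFC.sqrt_nonneg (E i))).1
  open scoped MatrixOrder in
  have hSsq : ∀ i, S i * S i = E i := fun i => CFC.sqrt_mul_sqrt_self (E i) (hE i).nonneg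
  -- the columns of the block isometry
  set v : Fin d × Fin n → EuclideanSpace ℂ (Fin d × Fin n) :=
    fun q => WithLp.toLp 2 (fun p => S p.2 p.1 q.1) with hv
  have key : ∀ b b' : Fin d,
      (∑ p : Fin d × Fin n, (starRingEnd ℂ) (S p.2 p.1 b) * S p.2 p.1 b')
        = if b = b' then 1 else 0 := by
    intro b b'
    have : (∑ p : Fin d × Fin n, (starRingEnd ℂ) (S p.2 p.1 b) * S p.2 p.1 b')
        = ∑ j : Fin n, ((S j)ᴴ * S j) b b' := by
      rw [Fintype.sum_prod_type_right]
      refine Finset.sum_congr rfl fun j _ => ?_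
      rw [Matrix.mul_apply]
      refine Finset.sum_congr rfl fun a _ => ?_
      rw [Matrix.conjTranspose_apply]
      rfl
    rw [this]
    have : ∑ j : Fin n, ((S j)ᴴ * S j) b b' = (∑ j, E j) b b' := by
      rw [Matrix.sum_apply]
      refine Finset.sum_congr rfl fun j _ => ?_
      rw [hSherm, hSsq]
    rw [this, hEsum, Matrix.one_apply]
  -- orthonormality of the columns, restricted to apparatus index 0
  have hon : Orthonormal ℂ (({p : Fin d × Fin n | p.2 = 0}).restrict v) := by
    rw [orthonormal_iff_ite]
    rintro ⟨⟨b, j⟩, (hj : j = 0)⟩ ⟨⟨b', j'⟩, (hj' : j' = 0)⟩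
    have : (inner ℂ (v (b, j)) (v (b', j')) : ℂ)
        = ∑ p : Fin d × Fin n, (starRingEnd ℂ) (S p.2 p.1 b) * S p.2 p.1 b' := by
      rw [PiLp.inner_apply]
      exact Finset.sum_congr rfl fun p _ => RCLike.inner_apply' _ _
    show inner ℂ (v (b, j)) (v (b', j')) = _
    rw [this, key]
    subst hj; subst hj'
    by_cases hbb : b = b'
    · subst hbb; simp
    · rw [if_neg hbb, if_neg]
      simp only [ne_eq, Subtype.mk.injEq, Prod.mk.injEq]
      tauto
  obtain ⟨B, hB⟩ := hon.exists_orthonormalBasis_extension_of_card_eq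
    (by simp [finrank_euclideanSpace])
  refine ⟨n, hn, EuclideanSpace.single 0 1, by simp [EuclideanSpace.norm_single],
    Matrix.of (fun p q => B q p), ?_, fun i => Matrix.diagonal (fun j => if j = i then 1 else 0),
    ?_, ?_, ?_, ?_, ?_⟩
  · -- unitarity
    rw [Matrix.mem_unitaryGroup_iff']
    ext q q'
    rw [Matrix.mul_apply, Matrix.one_apply]
    have := orthonormal_iff_ite.mp B.orthonormal q q'
    rw [PiLp.inner_apply] at this
    simpa [mul_comm] using this
  · intro i
    ext j j'
    simp [Matrix.diagonal_apply, Matrix.conjTranspose_apply]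
    split <;> split <;> simp_all
  · intro i
    ext a b
    simp only [Matrix.diagonal_mul_diagonal, Matrix.diagonal_apply]
    split_ifs <;> simp
  · intro i j hij
    ext a b
    simp only [Matrix.diagonal_mul_diagonal, Matrix.diagonal_apply, Matrix.zero_apply]
    split_ifs <;> simp_all
  · ext a b
    simp only [Matrix.sum_apply, Matrix.diagonal_apply, Matrix.one_apply]
    by_cases h : a = b
    · subst h; simp [Finset.sum_ite_eq]
    · simp [h]
  · -- probability reproducibility
    intro ψ i
    set φ0 : EuclideanSpace ℂ (Fin n) := EuclideanSpace.single 0 1 with hφ0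
    set u : Fin d × Fin n → ℂ :=
      (Matrix.of fun p q => B q p).mulVec (fun p => ψ p.1 * φ0 p.2) with hu
    have hucol : ∀ p : Fin d × Fin n, u p = ((S p.2).mulVec ψ) p.1 := by
      intro p
      rw [hu, Matrix.mulVec, dotProduct, Fintype.sum_prod_type_right]
      have : ∀ j : Fin n, ∀ b : Fin d,
          (Matrix.of fun p q => B q p) p (b, j) * (ψ b * φ0 j)
            = if j = 0 then B (b, 0) p * ψ b else 0 := by
        intro j b
        rw [hφ0]
        simp only [EuclideanSpace.single_apply]
        split
        · subst ‹j = (0 : Fin n)›; simp [Matrix.of_apply]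
        · simp
      calc ∑ j : Fin n, ∑ b : Fin d, (Matrix.of fun p q => B q p) p (b, j) * (ψ b * φ0 j)
          = ∑ j : Fin n, ∑ b : Fin d, if j = 0 then B (b, 0) p * ψ b else 0 := by
            refine Finset.sum_congr rfl fun j _ => Finset.sum_congr rfl fun b _ => this j b
        _ = ∑ b : Fin d, B (b, 0) p * ψ b := by
            rw [Finset.sum_comm]
            refine Finset.sum_congr rfl fun b _ => ?_
            simp
        _ = ∑ b : Fin d, S p.2 p.1 b * ψ b := by
            refine Finset.sum_congr rfl fun b _ => ?_
            rw [hB (b, 0) rfl]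
        _ = ((S p.2).mulVec ψ) p.1 := rfl
    have hkron : ∀ p : Fin d × Fin n,
        (((1 : Matrix (Fin d) (Fin d) ℂ) ⊗ₖ
            Matrix.diagonal (fun j => if j = i then (1:ℂ) else 0)).mulVec u) p
          = if p.2 = i then u p else 0 := by
      intro p
      rw [Matrix.mulVec, dotProduct, Fintype.sum_prod_type_right]
      have : ∀ j : Fin n, ∀ b : Fin d,
          ((1 : Matrix (Fin d) (Fin d) ℂ) ⊗ₖ
              Matrix.diagonal (fun j => if j = i then (1:ℂ) else 0)) p (b, j) * u (b, j)
            = if p.2 = j then (if p.1 = b then (if p.2 = i then u (b, j) else 0) else 0) else 0 := by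
        intro j b
        rw [Matrix.kroneckerMap_apply, Matrix.one_apply, Matrix.diagonal_apply]
        by_cases h1 : p.2 = j
        · by_cases h2 : p.1 = b
          · by_cases h3 : p.2 = i <;> simp [h1, h2, h3, h1 ▸ h3]
          · simp [h1, h2]
        · simp [h1]
      calc ∑ j : Fin n, ∑ b : Fin d,
            ((1 : Matrix (Fin d) (Fin d) ℂ) ⊗ₖ
              Matrix.diagonal (fun j => if j = i then (1:ℂ) else 0)) p (b, j) * u (b, j)
          = ∑ j : Fin n, ∑ b : Fin d, if p.2 = j then
              (if p.1 = b then (if p.2 = i then u (b, j) else 0) else 0) else 0 := by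
            refine Finset.sum_congr rfl fun j _ => Finset.sum_congr rfl fun b _ => this j b
        _ = if p.2 = i then u p else 0 := by simp [Finset.sum_ite_eq]
    have hLHS : (star u) ⬝ᵥ (((1 : Matrix (Fin d) (Fin d) ℂ) ⊗ₖ
          Matrix.diagonal (fun j => if j = i then (1:ℂ) else 0)).mulVec u)
        = star ((S i).mulVec ψ) ⬝ᵥ ((S i).mulVec ψ) := by
      rw [dotProduct, Fintype.sum_prod_type_right]
      calc ∑ j : Fin n, ∑ b : Fin d, (star u) (b, j) *
              (((1 : Matrix (Fin d) (Fin d) ℂ) ⊗ₖ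
                Matrix.diagonal (fun j => if j = i then (1:ℂ) else 0)).mulVec u) (b, j)
          = ∑ j : Fin n, ∑ b : Fin d, if j = i then (star u) (b, j) * u (b, j) else 0 := by
            refine Finset.sum_congr rfl fun j _ => Finset.sum_congr rfl fun b _ => ?_
            rw [hkron (b, j)]
            by_cases h : j = i <;> simp [h]
        _ = ∑ b : Fin d, (star u) (b, i) * u (b, i) := by simp
        _ = star ((S i).mulVec ψ) ⬝ᵥ ((S i).mulVec ψ) := by
            rw [dotProduct]
            refine Finset.sum_congr rfl fun b _ => ?_
            simp only [Pi.star_apply, hucol (b, i)]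
    show star u ⬝ᵥ (((1 : Matrix (Fin d) (Fin d) ℂ) ⊗ₖ
        Matrix.diagonal (fun j => if j = i then (1:ℂ) else 0)).mulVec u)
      = star ψ ⬝ᵥ (E i).mulVec ψ
    conv at hLHS => rhs; rw [Matrix.star_mulVec, hSherm i, ← Matrix.dotProduct_mulVec,
      Matrix.mulVec_mulVec, hSsq i]
    exact hLHS
end

section
/- Let d be a positive natural number, let n be a positive natural number, and for each i ∈ Fin n let (K_{i,j})_{j ∈ J_i} be a finite family of matrices in Matrix (Fin d) (Fin d) ℂ such that ∑_{i,j} K_{i,j}* K_{i,j} = 1. Define the operations Φ_i(T) := ∑_{j ∈ J_i} K_{i,j} T K_{i,j}*. Then there exist a positive natural number m, a unit vector φ ∈ EuclideanSpace ℂ (Fin m), a unitary matrix U on ℂ^{d·m} (indexed by Fin d × Fin m, with T ⊗ P_φ the Kronecker-type product ((T ⊗ P_φ)_{(a,b),(a',b')} = T_{a a'} (P_φ)_{b b'}) and B ⊗ Z_i defined analogously), and pairwise orthogonal projections (Z_i)_{i ∈ Fin n} on ℂ^m with ∑_i Z_i = 1, such that for every matrix T ∈ Matrix (Fin d) (Fin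 d) ℂ, every B ∈ Matrix (Fin d) (Fin d) ℂ, and every i: trace((B ⊗ Z_i) · U (T ⊗ P_φ) U*) = trace(Φ_i(T) · B). -/
open scoped ComplexOrder Matrix Kronecker

/-- Fundamental theorem of quantum measurement theory, second half (finite
dimensions, finite outcomes): every completely positive instrument, given in
Kraus form `Φ_i(T) = ∑_j K_{i,j} T K_{i,j}*` with
`∑_{i,j} K_{i,j}* K_{i,j} = 1`, admits an implementation by a measurement
scheme: the sequential joint probabilities
`trace((B ⊗ Z_i) · U (T ⊗ P_φ) U*)` equal `trace(Φ_i(T) · B)`. -/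
theorem instrument_admits_measurement_scheme
    (d n : ℕ) (hd : 0 < d) (hn : 0 < n)
    (r : Fin n → ℕ)
    (K : (i : Fin n) → Fin (r i) → Matrix (Fin d) (Fin d) ℂ)
    (hK : ∑ i, ∑ j, (K i j)ᴴ * K i j = 1) :
    ∃ (m : ℕ), 0 < m ∧
    ∃ (φ : EuclideanSpace ℂ (Fin m)), ‖φ‖ = 1 ∧
    ∃ (U : Matrix (Fin d × Fin m) (Fin d × Fin m) ℂ),
      U ∈ Matrix.unitaryGroup (Fin d × Fin m) ℂ ∧
    ∃ (Z : Fin n → Matrix (Fin m) (Fin m) ℂ),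
      (∀ i, (Z i)ᴴ = Z i) ∧ (∀ i, Z i * Z i = Z i) ∧
      (∀ i j, i ≠ j → Z i * Z j = 0) ∧ (∑ i, Z i = 1) ∧
      (∀ (T B : Matrix (Fin d) (Fin d) ℂ) (i : Fin n),
        ((B ⊗ₖ Z i) *
            (U * (T ⊗ₖ (Matrix.of fun b b' => φ b * star (φ b'))) * Uᴴ)).trace =
          ((∑ j, K i j * T * (K i j)ᴴ) * B).trace) := by
    classical
  set S := (Σ i : Fin n, Fin (r i))
  -- S is nonempty
  have hSne : Nonempty S := by
    by_contra h
    rw [not_nonempty_iff] at h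
    have : (0 : Matrix (Fin d) (Fin d) ℂ) = 1 := by
      rw [← hK]
      refine (Finset.sum_eq_zero ?_).symm
      intro i _
      exact Finset.sum_eq_zero fun j _ => (h.false ⟨i, j⟩).elim
    have := congrFun (congrFun this ⟨0, hd⟩) ⟨0, hd⟩
    simp [Matrix.one_apply] at this
  have hm : 0 < Fintype.card S := Fintype.card_pos
  set m := Fintype.card S with hmdef
  refine ⟨m, hm, ?_⟩
  set en : S ≃ Fin m := Fintype.equivFin S
  set p0 : Fin m := ⟨0, hm⟩
  refine ⟨EuclideanSpace.single p0 1, by simp, ?_⟩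
  -- the isometry columns
  set w : Fin d → EuclideanSpace ℂ (Fin d × Fin m) :=
    fun a => WithLp.toLp 2 (fun ce : Fin d × Fin m => K (en.symm ce.2).1 (en.symm ce.2).2 ce.1 a) with hw
  have hinner : ∀ a a' : Fin d, (inner ℂ (w a) (w a') : ℂ) = if a = a' then 1 else 0 := by
    intro a a'
    have h1 : (inner ℂ (w a) (w a') : ℂ)
        = ∑ ce : Fin d × Fin m,
            (starRingEnd ℂ) (K (en.symm ce.2).1 (en.symm ce.2).2 ce.1 a)
              * K (en.symm ce.2).1 (en.symm ce.2).2 ce.1 a' := by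
      simp [hw, PiLp.inner_apply, RCLike.inner_apply, mul_comm]
    rw [h1]
    rw [Fintype.sum_prod_type_right]
    have h2 : ∀ e : Fin m,
        (∑ c : Fin d, (starRingEnd ℂ) (K (en.symm e).1 (en.symm e).2 c a)
          * K (en.symm e).1 (en.symm e).2 c a')
        = ((K (en.symm e).1 (en.symm e).2)ᴴ * K (en.symm e).1 (en.symm e).2) a a' := by
      intro e
      simp [Matrix.mul_apply, Matrix.conjTranspose_apply]
    simp_rw [h2]
    rw [Equiv.sum_comp en.symm (fun σ : S => ((K σ.1 σ.2)ᴴ * K σ.1 σ.2) a a')]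
    rw [← Finset.univ_sigma_univ, Finset.sum_sigma]
    have := congrFun (congrFun hK a) a'
    rw [Matrix.sum_apply] at this
    simp_rw [Matrix.sum_apply] at this
    rw [this, Matrix.one_apply]
  -- extend to an orthonormal basis
  have hcard : Module.finrank ℂ (EuclideanSpace ℂ (Fin d × Fin m))
      = Fintype.card (Fin d × Fin m) := finrank_euclideanSpace
  have horth : Orthonormal ℂ
      (Set.restrict {p : Fin d × Fin m | p.2 = p0} (fun p => w p.1)) := by
    rw [orthonormal_iff_ite]
    rintro ⟨p, hp⟩ ⟨q, hq⟩
    show inner ℂ (w p.1) (w q.1) = _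
    rw [hinner]
    by_cases h : p.1 = q.1
    · have : (⟨p, hp⟩ : {p : Fin d × Fin m | p.2 = p0}) = ⟨q, hq⟩ :=
        Subtype.ext (Prod.ext h (hp.trans hq.symm))
      simp [h, this]
    · have : (⟨p, hp⟩ : {p : Fin d × Fin m | p.2 = p0}) ≠ ⟨q, hq⟩ := by
        intro hc
        exact h (congrArg (fun x => x.1.1) hc)
      simp [h, this]
  obtain ⟨bas, hbas⟩ := horth.exists_orthonormalBasis_extension_of_card_eq hcard
  have hbas' : ∀ a : Fin d, bas (a, p0) = w a := fun a => hbas (a, p0) rfl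
  set U : Matrix (Fin d × Fin m) (Fin d × Fin m) ℂ :=
    Matrix.of fun x y => bas y x with hU
  have hUmem : U ∈ Matrix.unitaryGroup (Fin d × Fin m) ℂ := by
    rw [Matrix.mem_unitaryGroup_iff']
    ext y y'
    have := (orthonormal_iff_ite (𝕜 := ℂ)).mp bas.orthonormal y y'
    rw [PiLp.inner_apply] at this
    simpa [Matrix.mul_apply, Matrix.one_apply, hU, Matrix.conjTranspose_apply,
      RCLike.inner_apply, mul_comm] using this
  refine ⟨U, hUmem, fun i =>
    Matrix.of fun e e' => if e = e' ∧ (en.symm e).1 = i then 1 else 0, ?_, ?_, ?_, ?_, ?_⟩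
  · intro i
    ext e e'
    simp only [Matrix.conjTranspose_apply, Matrix.of_apply]
    by_cases h : e' = e
    · subst h; simp
    · rw [if_neg (fun hc => h hc.1), if_neg (fun hc => h hc.1.symm)]
      simp
  · intro i
    ext e e'
    simp only [Matrix.mul_apply, Matrix.of_apply, ite_mul, one_mul, zero_mul]
    rw [Finset.sum_eq_single e]
    · by_cases h : (en.symm e).1 = i
      · by_cases h' : e = e'
        · subst h'; simp [h]
        · simp [h, h']
      · simp [h]
    · intro x _ hx
      rw [if_neg (fun hc => hx hc.1.symm)]
    · simp
  · intro i j hij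
    ext e e'
    simp only [Matrix.mul_apply, Matrix.of_apply, Matrix.zero_apply, ite_mul, one_mul,
      zero_mul]
    rw [Finset.sum_eq_single e]
    · by_cases h : (en.symm e).1 = i
      · have hj : ¬((en.symm e).1 = j) := fun hc => hij (h.symm.trans hc)
        simp [h, hj, hij]
      · simp [h]
    · intro x _ hx
      rw [if_neg (fun hc => hx hc.1.symm)]
    · simp
  · ext e e'
    simp only [Matrix.sum_apply, Matrix.of_apply, Matrix.one_apply]
    by_cases h : e = e'
    · subst h
      rw [Finset.sum_eq_single (en.symm e).1]
      · simp
      · intro x _ hx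
        exact if_neg (fun hc => hx hc.2.symm)
      · simp
    · simp [h]
  · intro T B i
    set KK : Fin m → Matrix (Fin d) (Fin d) ℂ :=
      fun e => K (en.symm e).1 (en.symm e).2 with hKK
    have hUcol : ∀ (x : Fin d × Fin m) (a : Fin d),
        U x (a, p0) = KK x.2 x.1 a := by
      intro x a
      show bas (a, p0) x = _
      rw [hbas' a, hw]
    set P : Matrix (Fin m) (Fin m) ℂ :=
      Matrix.of fun b b' => EuclideanSpace.single p0 (1:ℂ) b
        * star (EuclideanSpace.single p0 (1:ℂ) b') with hP
    have hstep1 : ∀ (x z : Fin d × Fin m), (U * (T ⊗ₖ P)) x z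
        = (if z.2 = p0 then 1 else 0) * ∑ a, KK x.2 x.1 a * T a z.1 := by
      intro x z
      rw [Matrix.mul_apply, Fintype.sum_prod_type]
      have : ∀ a : Fin d, ∑ b : Fin m, U x (a, b) * (T ⊗ₖ P) (a, b) z
          = (if z.2 = p0 then 1 else 0) * (KK x.2 x.1 a * T a z.1) := by
        intro a
        rw [Finset.sum_eq_single p0]
        · rw [hUcol]
          simp only [hP, Matrix.kroneckerMap_apply, Matrix.of_apply,
            EuclideanSpace.single_apply, if_pos rfl, apply_ite star, star_one, star_zero]
          by_cases hz : z.2 = p0 <;> simp [hz] <;> ring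
        · intro b _ hb
          simp only [hP, Matrix.kroneckerMap_apply, Matrix.of_apply,
            EuclideanSpace.single_apply, if_neg hb]
          ring
        · simp
      rw [Finset.sum_congr rfl (fun a _ => this a), ← Finset.mul_sum]
    set A : Fin m → Fin m → Matrix (Fin d) (Fin d) ℂ :=
      fun e e' => KK e * T * (KK e')ᴴ with hA
    have hM : ∀ (x y : Fin d × Fin m), (U * (T ⊗ₖ P) * Uᴴ) x y
        = A x.2 y.2 x.1 y.1 := by
      intro x y
      rw [Matrix.mul_apply]
      rw [Fintype.sum_prod_type_right]
      have : ∀ b : Fin m, ∑ a : Fin d, (U * (T ⊗ₖ P)) x (a, b) * Uᴴ (a, b) y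
          = (if b = p0 then 1 else 0)
              * ∑ a, (∑ a', KK x.2 x.1 a' * T a' a) * star (U y (a, b)) := by
        intro b
        simp_rw [hstep1, Matrix.conjTranspose_apply, mul_assoc]
        exact (Finset.mul_sum Finset.univ
          (fun a => (∑ a', KK x.2 x.1 a' * T a' a) * star (U y (a, b)))
          (if b = p0 then (1:ℂ) else 0)).symm
      rw [Finset.sum_congr rfl (fun b _ => this b)]
      simp_rw [ite_mul, one_mul, zero_mul]
      rw [Finset.sum_ite_eq' Finset.univ p0]
      simp only [Finset.mem_univ, if_true]
      simp_rw [hUcol]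
      simp only [hA]
      rw [Matrix.mul_apply]
      refine Finset.sum_congr rfl fun a _ => ?_
      rw [Matrix.mul_apply, Matrix.conjTranspose_apply]
    have hMeq : U * (T ⊗ₖ P) * Uᴴ
        = Matrix.of (fun x y => A x.2 y.2 x.1 y.1) := by
      ext x y; exact hM x y
    have hLHS : ((B ⊗ₖ (Matrix.of fun e e' =>
          if e = e' ∧ (en.symm e).1 = i then (1:ℂ) else 0)) * (U * (T ⊗ₖ P) * Uᴴ)).trace
        = ∑ e : Fin m, if (en.symm e).1 = i
            then (B * A e e).trace else 0 := by
      rw [hMeq, Matrix.trace]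
      unfold Matrix.diag
      simp only [Matrix.mul_apply, Matrix.kroneckerMap_apply, Matrix.of_apply]
      simp_rw [mul_ite, mul_one, mul_zero, ite_mul, zero_mul, ite_and]
      rw [Fintype.sum_prod_type]
      simp_rw [Fintype.sum_prod_type, Finset.sum_ite_eq, Finset.mem_univ, if_true]
      rw [Finset.sum_comm]
      refine Finset.sum_congr rfl fun e _ => ?_
      by_cases hQe : (en.symm e).1 = i
      · simp only [hQe, if_true]
        rw [Matrix.trace]
        unfold Matrix.diag
        simp only [Matrix.mul_apply, Finset.mul_sum]
      · simp [hQe]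
    rw [hLHS]
    rw [← Equiv.sum_comp en (fun e => if (en.symm e).1 = i
      then (B * A e e).trace else 0)]
    have hper : ∀ σ : S, (if (en.symm (en σ)).1 = i
          then (B * A (en σ) (en σ)).trace else 0)
        = if σ.1 = i then (B * (K σ.1 σ.2 * T * (K σ.1 σ.2)ᴴ)).trace else 0 := by
      intro σ
      simp only [hA, hKK]
      rw [Equiv.symm_apply_apply en σ]
    rw [Finset.sum_congr rfl fun σ _ => hper σ]
    rw [← Finset.univ_sigma_univ, Finset.sum_sigma]
    have hpull : ∀ i' : Fin n, ∑ j : Fin (r i'),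
        (if i' = i then (B * (K i' j * T * (K i' j)ᴴ)).trace else 0)
        = if i' = i then ∑ j : Fin (r i'), (B * (K i' j * T * (K i' j)ᴴ)).trace
          else 0 := fun i' => by split <;> simp
    rw [Finset.sum_congr rfl fun i' _ => hpull i', Finset.sum_ite_eq' Finset.univ i]
    simp only [Finset.mem_univ, if_true]
    rw [Matrix.sum_mul, Matrix.trace_sum]
    exact Finset.sum_congr rfl fun j _ => Matrix.trace_mul_comm B _
end
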